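/- arXiv:2509.13238 — 5 statements merged into one kernel-verified Lean document; each statement's English description precedes it below -/
import Mathlib

section
/- Let F be a field of characteristic 0, let l ∈ F[x_1,...,x_n] be a linear polynomial whose support (number of variables appearing with nonzero coefficient) is at least 2, let h ∈ F[x_1,...,x_n] be a nonzero polynomial, and let d ∈ ℕ. Then the polynomial l^d · h has at least d+1 monomials with nonzero coefficient. -/
section SparsityAux
open scoped Classical
open Polynomial

lemma strip {K : Type*} [Field K] : ∀ (m : ℕ) (f : K[X]), f ≠ 0 → f.natDegree = m →
    ∃ v g, f = X ^ v * g ∧ g.coeff 0 ≠ 0 := by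
  intro m
  induction m using Nat.strong_induction_on with
  | _ m ih =>
    intro f hf hn
    by_cases h0 : f.coeff 0 = 0
    · obtain ⟨g, hg⟩ := X_dvd_iff.2 h0
      have hg0 : g ≠ 0 := by rintro rfl; simp at hg; exact hf hg
      have hlt : g.natDegree < m := by
        subst hn hg
        rw [natDegree_mul X_ne_zero hg0, natDegree_X]
        omega
      obtain ⟨v, g', hgg, hc⟩ := ih g.natDegree hlt g hg0 rfl
      exact ⟨v + 1, g', by rw [hg, hgg, pow_succ]; ring, hc⟩
    · exact ⟨0, f, by simp, h0⟩

lemma supp_shift {K : Type*} [Field K] (v : ℕ) (g : K[X]) :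
    (X ^ v * g).support.card = g.support.card := by
  by_cases hg : g = 0
  · simp [hg]
  have : (X ^ v * g).support = g.support.image (· + v) := by
    ext m
    simp only [Finset.mem_image, mem_support_iff, coeff_X_pow_mul']
    constructor
    · intro hm
      split_ifs at hm with hv
      · exact ⟨m - v, hm, by omega⟩
      · simp at hm
    · rintro ⟨n, hn, rfl⟩
      simpa using hn
  rw [this, Finset.card_image_of_injective _ (add_left_injective v)]

lemma core {K : Type*} [Field K] [CharZero K] (r : K) (hr : r ≠ 0) :
    ∀ (d : ℕ) (f : K[X]), f ≠ 0 → (X - C r) ^ d ∣ f → d + 1 ≤ f.support.card := by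
  intro d
  induction d with
  | zero =>
    intro f hf _
    simpa [Nat.succ_le, Finset.card_pos, nonempty_support_iff] using hf
  | succ d ih =>
    intro f hf hdvd
    obtain ⟨v, g, rfl, hc0⟩ := strip f.natDegree f hf rfl
    have hg0 : g ≠ 0 := fun h => hf (by simp [h])
    have hcop : IsCoprime ((X : K[X]) ^ v) ((X - C r) ^ (d + 1)) := by
      have : IsCoprime (X - C (0 : K)) (X - C r) :=
        isCoprime_X_sub_C_of_isUnit_sub (by simpa using hr.isUnit.neg)
      simpa using (this.pow : IsCoprime _ _)
    have hdvdg : (X - C r) ^ (d + 1) ∣ g := (hcop.symm.dvd_of_dvd_mul_left hdvd)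
    -- derivative
    have hdvd' : (X - C r) ^ d ∣ derivative g := by
      obtain ⟨q, hq⟩ := hdvdg
      have : derivative g = (X - C r) ^ d *
          ((d + 1 : K[X]) * q + (X - C r) * derivative q) := by
        rw [hq]
        simp only [derivative_mul, derivative_pow, derivative_sub, derivative_X, derivative_C,
          sub_zero, mul_one, Nat.add_sub_cancel]
        push_cast
        simp only [C_add, Polynomial.C_eq_natCast, C_1]
        ring
      rw [this]
      exact dvd_mul_right _ _
    have hg' : derivative g ≠ 0 := by
      intro hzero
      have := Polynomial.eq_C_of_derivative_eq_zero hzero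
      have hgr : g.eval r = 0 := by
        have : (X - C r) ∣ g := (dvd_pow_self _ (Nat.succ_ne_zero d)).trans hdvdg
        exact (dvd_iff_isRoot.mp this)
      rw [this] at hgr hc0
      simp at hgr
      rw [hgr] at hc0
      simp at hc0
    have hIH := ih (derivative g) hg' hdvd'
    -- card of supp g ≥ card supp g' + 1
    have hzero_mem : 0 ∈ g.support := mem_support_iff.mpr hc0
    have hcard : (derivative g).support.card ≤ (g.support.erase 0).card := by
      apply Finset.card_le_card_of_injOn (fun m => m + 1)
      · intro m hm
        simp only [Finset.mem_coe, mem_support_iff, coeff_derivative] at hm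
        have : g.coeff (m + 1) ≠ 0 := fun h => hm (by simp [h])
        simp [Finset.mem_erase, mem_support_iff, this]
      · intro x _ y _ hxy; simpa using hxy
    have : (g.support.erase 0).card + 1 = g.support.card :=
      Finset.card_erase_add_one hzero_mem
    rw [supp_shift]
    omega

lemma exists_root_ne_zero {K : Type*} [Field K] [IsAlgClosed K] (g : K[X])
    (hg : 2 ≤ g.support.card) : ∃ r, r ≠ 0 ∧ g.IsRoot r := by
  have hg0 : g ≠ 0 := by rintro rfl; simp at hg
  obtain ⟨v, g₁, rfl, hc⟩ := strip g.natDegree g hg0 rfl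
  have hdeg : g₁.natDegree ≠ 0 := by
    intro h0
    obtain ⟨b, rfl⟩ := Polynomial.natDegree_eq_zero.mp h0
    have hb : b ≠ 0 := by simpa using hc
    have : (X ^ v * C b).support.card ≤ 1 := by
      rw [supp_shift, support_C hb]
      simp
    omega
  have hpos : 0 < g₁.natDegree := Nat.pos_of_ne_zero hdeg
  obtain ⟨r, hr⟩ := IsAlgClosed.exists_root g₁ (by
    rw [Polynomial.degree_eq_natDegree (fun h => hdeg (by simp [h]))]
    exact_mod_cast hdeg)
  refine ⟨r, ?_, ?_⟩
  · rintro rfl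
    exact hc (by rwa [coeff_zero_eq_eval_zero])
  · simp [IsRoot, eval_mul, hr.eq_zero]

lemma digit_inj : ∀ (n B : ℕ) (α β : Fin n → ℕ), (∀ k, α k < B) → (∀ k, β k < B) →
    (∑ k, α k * B ^ (k : ℕ)) = (∑ k, β k * B ^ (k : ℕ)) → α = β := by
  intro n
  induction n with
  | zero => intro B α β _ _ _; funext k; exact k.elim0
  | succ n ih =>
    intro B α β hα hβ hsum
    rw [Fin.sum_univ_succ, Fin.sum_univ_succ] at hsum
    simp only [Fin.val_zero, pow_zero, mul_one, Fin.val_succ] at hsum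
    have hre : ∀ γ : Fin (n+1) → ℕ, (∑ k : Fin n, γ k.succ * B ^ ((k : ℕ) + 1)) =
        B * ∑ k : Fin n, γ k.succ * B ^ (k : ℕ) := by
      intro γ
      rw [Finset.mul_sum]
      congr 1; funext k; ring
    rw [hre α, hre β] at hsum
    have h0 : α 0 = β 0 := by
      have := congrArg (· % B) hsum
      simpa [Nat.add_mul_mod_self_left, Nat.mod_eq_of_lt (hα 0), Nat.mod_eq_of_lt (hβ 0)]
        using this
    have hB : 0 < B := lt_of_le_of_lt (Nat.zero_le _) (hα 0)
    have htail : (fun k : Fin n => α k.succ) = (fun k : Fin n => β k.succ) := by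
      apply ih B _ _ (fun k => hα k.succ) (fun k => hβ k.succ)
      rw [h0] at hsum
      have := Nat.add_left_cancel hsum
      exact Nat.eq_of_mul_eq_mul_left hB this
    funext k
    refine Fin.cases h0 (fun k => ?_) k
    exact congrFun htail k

open MvPolynomial in
theorem aux_main
    {F : Type*} [Field F] [CharZero F] {n : ℕ} (a : Fin n → F) (c : F)
    (hsupp : 2 ≤ (Finset.univ.filter fun i => a i ≠ 0).card)
    (h : MvPolynomial (Fin n) F) (hh : h ≠ 0) (d : ℕ) :
    d + 1 ≤ (((∑ i, MvPolynomial.C (a i) * MvPolynomial.X i + MvPolynomial.C c) ^ d * h).support).card := by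
  classical
  set l : MvPolynomial (Fin n) F := ∑ i, MvPolynomial.C (a i) * MvPolynomial.X i
    + MvPolynomial.C c with hl
  set K := AlgebraicClosure F
  have hφ : Function.Injective (algebraMap F K) := (algebraMap F K).injective
  haveI : CharZero K := charZero_of_injective_algebraMap hφ
  set B : ℕ := h.totalDegree + 2 with hB
  set N : Fin n → ℕ := fun k => B ^ (k : ℕ) with hN
  set w : (Fin n →₀ ℕ) → ℕ := fun α => ∑ k, α k * N k with hw
  set ψ : MvPolynomial (Fin n) F →+* Polynomial K :=
    MvPolynomial.eval₂Hom (Polynomial.C.comp (algebraMap F K))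
      (fun k => Polynomial.X ^ N k) with hψ
  have key : ∀ q : MvPolynomial (Fin n) F,
      ψ q = ∑ α ∈ q.support, Polynomial.C (algebraMap F K (MvPolynomial.coeff α q))
        * Polynomial.X ^ w α := by
    intro q
    rw [hψ, MvPolynomial.coe_eval₂Hom, MvPolynomial.eval₂_eq']
    refine Finset.sum_congr rfl fun α _ => ?_
    congr 1
    rw [hw]
    simp only [← pow_mul]
    rw [← Finset.prod_pow_eq_pow_sum]
    exact Finset.prod_congr rfl fun k _ => by rw [mul_comm]
  have hcard : ∀ q : MvPolynomial (Fin n) F, (ψ q).support.card ≤ q.support.card := by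
    intro q
    rw [key q]
    have hsub : (∑ α ∈ q.support, Polynomial.C (algebraMap F K (MvPolynomial.coeff α q))
        * Polynomial.X ^ w α).support ⊆ q.support.biUnion fun α =>
        (Polynomial.C (algebraMap F K (MvPolynomial.coeff α q)) * Polynomial.X ^ w α).support := by
      intro m hm
      rw [Polynomial.mem_support_iff, Polynomial.finset_sum_coeff] at hm
      obtain ⟨α, hα, hne⟩ := Finset.exists_ne_zero_of_sum_ne_zero hm
      exact Finset.mem_biUnion.mpr ⟨α, hα, Polynomial.mem_support_iff.mpr hne⟩
    calc (∑ α ∈ q.support, Polynomial.C (algebraMap F K (MvPolynomial.coeff α q))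
          * Polynomial.X ^ w α).support.card
        ≤ (q.support.biUnion fun α => (Polynomial.C (algebraMap F K (MvPolynomial.coeff α q))
          * Polynomial.X ^ w α).support).card :=
          Finset.card_le_card hsub
      _ ≤ ∑ α ∈ q.support, (Polynomial.C (algebraMap F K (MvPolynomial.coeff α q))
          * Polynomial.X ^ w α).support.card := Finset.card_biUnion_le
      _ ≤ ∑ _α ∈ q.support, 1 := by
          apply Finset.sum_le_sum
          intro α _
          exact (Finset.card_le_card (Polynomial.support_C_mul_X_pow' _ _)).trans (by simp)
      _ = q.support.card := by simp
  -- injectivity of w on supports of bounded total degree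
  have hwinj : ∀ α ∈ h.support, ∀ β ∈ h.support, w α = w β → α = β := by
    intro α hα β hβ hEq
    have bound : ∀ γ : Fin n →₀ ℕ, γ ∈ h.support → ∀ k, γ k < B := by
      intro γ hγ k
      have h1 : (γ.sum fun _ e => e) ≤ h.totalDegree := MvPolynomial.le_totalDegree hγ
      have h2 : γ k ≤ γ.sum fun _ e => e := by
        by_cases hk : k ∈ γ.support
        · exact Finset.single_le_sum (fun _ _ => Nat.zero_le _) hk
        · simp [Finsupp.notMem_support_iff.mp hk]
      omega
    have := digit_inj n B (fun k => α k) (fun k => β k) (bound α hα) (bound β hβ) (by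
      simpa [hw, hN] using hEq)
    ext k
    exact congrFun this k
  have hψh : ψ h ≠ 0 := by
    intro h0
    obtain ⟨α₀, hα₀⟩ := (MvPolynomial.support_nonempty.mpr hh)
    have : (ψ h).coeff (w α₀) = algebraMap F K (MvPolynomial.coeff α₀ h) := by
      rw [key h, Polynomial.finset_sum_coeff]
      rw [Finset.sum_eq_single α₀]
      · simp [Polynomial.coeff_C_mul, Polynomial.coeff_X_pow]
      · intro β hβ hne
        have : w α₀ ≠ w β := fun hEq => hne (hwinj β hβ α₀ hα₀ hEq.symm)
        simp [Polynomial.coeff_C_mul, Polynomial.coeff_X_pow, this]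
      · intro habs; exact absurd hα₀ habs
    rw [h0] at this
    simp only [Polynomial.coeff_zero] at this
    exact (MvPolynomial.mem_support_iff.mp hα₀) (hφ (by simpa using this.symm))
  have hψl : ψ l = ∑ k, Polynomial.C (algebraMap F K (a k)) * Polynomial.X ^ N k
      + Polynomial.C (algebraMap F K c) := by
    rw [hl]
    simp only [map_add, map_sum, map_mul, hψ, MvPolynomial.eval₂Hom_C,
      MvPolynomial.eval₂Hom_X', RingHom.comp_apply]
  have hNinj : Function.Injective N := fun x y hxy => by
    have := Nat.pow_right_injective (by omega : 2 ≤ B) hxy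
    exact Fin.val_injective this
  have hcoeffl : ∀ i : Fin n, (ψ l).coeff (N i) = algebraMap F K (a i) := by
    intro i
    rw [hψl, Polynomial.coeff_add, Polynomial.finset_sum_coeff]
    have hNi : N i ≠ 0 := (pow_pos (by omega : 0 < B) _).ne'
    rw [Polynomial.coeff_C, if_neg hNi, add_zero]
    rw [Finset.sum_eq_single i]
    · simp [Polynomial.coeff_C_mul, Polynomial.coeff_X_pow]
    · intro k _ hk
      have : N i ≠ N k := fun hEq => hk (hNinj hEq).symm
      simp [Polynomial.coeff_C_mul, Polynomial.coeff_X_pow, this]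
    · simp
  obtain ⟨i, hi, j, hj, hij⟩ := Finset.one_lt_card.mp (lt_of_lt_of_le one_lt_two hsupp)
  simp only [Finset.mem_filter, Finset.mem_univ, true_and] at hi hj
  have hmem : ∀ i : Fin n, a i ≠ 0 → N i ∈ (ψ l).support := fun i hi =>
    Polynomial.mem_support_iff.mpr (by rw [hcoeffl i]; exact fun h0 => hi (hφ (by simpa using h0)))
  have h2 : 2 ≤ (ψ l).support.card := by
    have : ({N i, N j} : Finset ℕ) ⊆ (ψ l).support := by
      intro x hx
      rcases Finset.mem_insert.mp hx with rfl | hx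
      · exact hmem i hi
      · exact (Finset.mem_singleton.mp hx) ▸ hmem j hj
    calc 2 = ({N i, N j} : Finset ℕ).card := by
          rw [Finset.card_insert_of_notMem (by simp only [Finset.mem_singleton]; exact fun hEq => hij (hNinj hEq)),
            Finset.card_singleton]
      _ ≤ _ := Finset.card_le_card this
  have hψl0 : ψ l ≠ 0 := fun h0 => by rw [h0] at h2; simp at h2
  obtain ⟨r, hr0, hroot⟩ := exists_root_ne_zero (ψ l) h2
  have hdvd : (Polynomial.X - Polynomial.C r) ^ d ∣ ψ (l ^ d * h) := by
    rw [map_mul, map_pow]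
    exact Dvd.dvd.mul_right (pow_dvd_pow_of_dvd (Polynomial.dvd_iff_isRoot.mpr hroot) d) _
  have hne : ψ (l ^ d * h) ≠ 0 := by
    rw [map_mul, map_pow]
    exact mul_ne_zero (pow_ne_zero _ hψl0) hψh
  calc d + 1 ≤ (ψ (l ^ d * h)).support.card := core r hr0 d _ hne hdvd
    _ ≤ (l ^ d * h).support.card := hcard _

end SparsityAux

open MvPolynomial
open scoped Classical

/-- over a field of characteristic 0, if `l` is a linear polynomial with
support (number of variables with nonzero coefficient) at least 2 and `h ≠ 0`,
then `l ^ d * h` has at least `d + 1` monomials with nonzero coefficient. -/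
theorem sparsity_of_power_of_linear_times_poly
    {F : Type*} [Field F] [CharZero F] {n : ℕ} (a : Fin n → F) (c : F)
    (hsupp : 2 ≤ (Finset.univ.filter fun i => a i ≠ 0).card)
    (h : MvPolynomial (Fin n) F) (hh : h ≠ 0) (d : ℕ) :
    d + 1 ≤ (((∑ i, C (a i) * X i + C c) ^ d * h).support).card :=
  aux_main a c hsupp h hh d
end

section
/- Let F be a field of characteristic 0, and let a_1, a_2 ∈ F be nonzero. Let h ∈ F[x_1, x_2] be a nonzero homogeneous polynomial of degree k, and let d ∈ ℕ. Then (a_1 x_1 + a_2 x_2)^d · h, when written as Σ_{i+j=d+k} c_{i,j} x_1^i x_2^j, has at least d+1 nonzero coefficients c_{i,j}. -/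
open MvPolynomial
open scoped Classical

lemma fin2_finsupp_eq (m : Fin 2 →₀ ℕ) :
    m = Finsupp.single 0 (m 0) + Finsupp.single 1 (m 1) := by
  ext j; fin_cases j <;> simp [Finsupp.single_apply]

lemma key_univ {F : Type*} [Field F] [CharZero F] (a₁ a₂ : F) (ha₁ : a₁ ≠ 0) (ha₂ : a₂ ≠ 0) :
    ∀ d : ℕ, ∀ f : Polynomial F, f ≠ 0 → (Polynomial.C a₁ * Polynomial.X + Polynomial.C a₂) ^ d ∣ f →
      d + 1 ≤ f.support.card := by
  intro d
  induction d with
  | zero =>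
    intro f hf _
    simpa [Finset.card_pos, Polynomial.support_nonempty] using hf
  | succ d ih =>
    intro f hf hdvd
    set L : Polynomial F := Polynomial.C a₁ * Polynomial.X + Polynomial.C a₂ with hL
    set m := f.natTrailingDegree with hm
    obtain ⟨f1, hf1⟩ : Polynomial.X ^ m ∣ f := by
      rw [Polynomial.X_pow_dvd_iff]
      intro j hj
      exact Polynomial.coeff_eq_zero_of_lt_natTrailingDegree hj
    have hf1ne : f1 ≠ 0 := by rintro rfl; simp at hf1; exact hf hf1
    have hc0 : f1.coeff 0 ≠ 0 := by
      have : f.coeff m = f1.coeff 0 := by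
        rw [hf1]; simpa using Polynomial.coeff_X_pow_mul f1 m 0
      rw [← this]
      exact Polynomial.trailingCoeff_nonzero_iff_nonzero.mpr hf
    have hcop : IsCoprime (L ^ (d + 1)) ((Polynomial.X : Polynomial F) ^ m) := by
      apply IsCoprime.pow
      apply IsCoprime.symm
      refine ⟨-Polynomial.C (a₁ * a₂⁻¹), Polynomial.C a₂⁻¹, ?_⟩
      rw [hL, ← Polynomial.C_1, ← mul_inv_cancel₀ ha₂]
      push_cast [Polynomial.C_mul]
      ring
    have hdvd1 : L ^ (d + 1) ∣ f1 := hcop.dvd_of_dvd_mul_left (hf1 ▸ hdvd)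
    obtain ⟨g, hg⟩ := hdvd1
    have hdL : L.natDegree = 1 := Polynomial.natDegree_linear ha₁
    have hdegf1 : 1 ≤ f1.natDegree := by
      have h1 := Polynomial.natDegree_le_of_dvd ⟨g, hg⟩ hf1ne
      rw [Polynomial.natDegree_pow, hdL, mul_one] at h1
      omega
    have hder_ne : Polynomial.derivative f1 ≠ 0 := by
      intro h0
      have := Polynomial.natDegree_eq_zero_of_derivative_eq_zero h0
      omega
    have hder_dvd : L ^ d ∣ Polynomial.derivative f1 := by
      refine ⟨Polynomial.C ((d : F) + 1) * (Polynomial.C a₁ * g) + L * Polynomial.derivative g, ?_⟩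
      rw [hg]
      rw [Polynomial.derivative_mul, Polynomial.derivative_pow]
      have : Polynomial.derivative L = Polynomial.C a₁ := by rw [hL]; simp
      rw [this]
      push_cast
      ring
    have h1 := ih (Polynomial.derivative f1) hder_ne hder_dvd
    have h2 : (Polynomial.derivative f1).support.card + 1 ≤ f1.support.card := by
      have hsub : insert 0 ((Polynomial.derivative f1).support.image (· + 1)) ⊆ f1.support := by
        intro i hi
        rcases Finset.mem_insert.mp hi with rfl | hi
        · exact Polynomial.mem_support_iff.mpr hc0
        · obtain ⟨j, hj, rfl⟩ := Finset.mem_image.mp hi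
          rw [Polynomial.mem_support_iff, Polynomial.coeff_derivative] at hj
          rw [Polynomial.mem_support_iff]
          intro h0
          exact hj (by simp [h0])
      have hcard := Finset.card_le_card hsub
      rw [Finset.card_insert_of_notMem (by simp),
        Finset.card_image_of_injective _ (add_left_injective 1)] at hcard
      omega
    have h3 : f1.support.card ≤ f.support.card := by
      have hsub : f1.support.image (· + m) ⊆ f.support := by
        intro i hi
        obtain ⟨j, hj, rfl⟩ := Finset.mem_image.mp hi
        rw [Polynomial.mem_support_iff] at hj ⊢
        rw [hf1]
        rwa [Polynomial.coeff_X_pow_mul]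
      have := Finset.card_le_card hsub
      rwa [Finset.card_image_of_injective _ (add_left_injective m)] at this
    omega

lemma coeff_phi {F : Type*} [Field F] (P : MvPolynomial (Fin 2) F) (n : ℕ)
    (hP : P.IsHomogeneous n) (i : ℕ) :
    (MvPolynomial.aeval ![Polynomial.X, (1 : Polynomial F)] P).coeff i =
      if i ≤ n then P.coeff (Finsupp.single 0 i + Finsupp.single 1 (n - i)) else 0 := by
  have hdeg : ∀ m ∈ P.support, m 0 + m 1 = n := by
    intro m hm
    have := hP (MvPolynomial.mem_support_iff.mp hm)
    simpa [Finsupp.weight_apply, Finsupp.sum_fintype, Fin.sum_univ_two] using this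
  conv_lhs => rw [P.as_sum]
  rw [map_sum, Polynomial.finset_sum_coeff]
  have hterm : ∀ m : Fin 2 →₀ ℕ,
      ((MvPolynomial.aeval ![Polynomial.X, (1 : Polynomial F)])
        (MvPolynomial.monomial m (P.coeff m))).coeff i
      = if m 0 = i then P.coeff m else 0 := by
    intro m
    rw [MvPolynomial.aeval_monomial]
    have hprod : (m.prod fun j e => (![Polynomial.X, (1 : Polynomial F)]) j ^ e)
        = Polynomial.X ^ (m 0) := by
      rw [Finsupp.prod_fintype _ _ (by intro j; simp)]
      simp [Fin.prod_univ_two]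
    rw [hprod]
    rw [show (algebraMap F (Polynomial F)) = Polynomial.C from rfl, Polynomial.coeff_C_mul]
    rw [Polynomial.coeff_X_pow]
    by_cases hmi : m 0 = i
    · simp [hmi]
    · rw [if_neg hmi, if_neg (fun h => hmi h.symm), mul_zero]
  rw [Finset.sum_congr rfl fun m _ => hterm m]
  by_cases hin : i ≤ n
  · rw [if_pos hin]
    rcases eq_or_ne (P.coeff (Finsupp.single 0 i + Finsupp.single 1 (n - i))) 0 with h0 | h0
    · rw [h0]
      apply Finset.sum_eq_zero
      intro m hm
      by_cases hmi : m 0 = i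
      · exfalso
        have hsum := hdeg m hm
        have hm1 : m 1 = n - i := by omega
        have : m = Finsupp.single 0 i + Finsupp.single 1 (n - i) := by
          rw [fin2_finsupp_eq m, hmi, hm1]
        rw [← this] at h0
        exact MvPolynomial.mem_support_iff.mp hm h0
      · rw [if_neg hmi]
    · rw [Finset.sum_eq_single (Finsupp.single 0 i + Finsupp.single 1 (n - i))]
      · simp [Finsupp.single_apply]
      · intro m hm hne
        by_cases hmi : m 0 = i
        · exfalso
          apply hne
          have hsum := hdeg m hm
          have hm1 : m 1 = n - i := by omega
          rw [fin2_finsupp_eq m, hmi, hm1]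
        · rw [if_neg hmi]
      · intro hnot
        rw [MvPolynomial.notMem_support_iff] at hnot
        rw [if_pos (by simp [Finsupp.single_apply]), hnot]
  · rw [if_neg hin]
    apply Finset.sum_eq_zero
    intro m hm
    have := hdeg m hm
    rw [if_neg (by omega)]

/-- over a field of characteristic 0, for nonzero `a₁ a₂` and a nonzero
homogeneous bivariate polynomial `h` of degree `k`, the polynomial
`(a₁ x₁ + a₂ x₂)^d * h = Σ_{i+j=d+k} c_{i,j} x₁^i x₂^j` has at least `d+1`
nonzero coefficients `c_{i,j}`. -/
theorem bivariate_power_linear_times_homogeneous_sparsity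
    {F : Type*} [Field F] [CharZero F] (a₁ a₂ : F) (ha₁ : a₁ ≠ 0) (ha₂ : a₂ ≠ 0)
    (k : ℕ) (h : MvPolynomial (Fin 2) F) (hh : h ≠ 0) (hhom : h.IsHomogeneous k)
    (d : ℕ) :
    d + 1 ≤ ((Finset.range (d + k + 1)).filter fun i =>
        MvPolynomial.coeff (Finsupp.single 0 i + Finsupp.single 1 (d + k - i))
          ((C a₁ * X 0 + C a₂ * X 1) ^ d * h) ≠ 0).card := by
  set P : MvPolynomial (Fin 2) F := (C a₁ * X 0 + C a₂ * X 1) ^ d * h with hP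
  have hlin : ((C a₁ * X 0 + C a₂ * X 1 : MvPolynomial (Fin 2) F)).IsHomogeneous 1 := by
    apply MvPolynomial.IsHomogeneous.add
    · simpa using (MvPolynomial.isHomogeneous_C (Fin 2) a₁).mul (MvPolynomial.isHomogeneous_X F 0)
    · simpa using (MvPolynomial.isHomogeneous_C (Fin 2) a₂).mul (MvPolynomial.isHomogeneous_X F 1)
  have hPhom : P.IsHomogeneous (d + k) := by
    have := (hlin.pow d).mul hhom
    simpa [mul_one] using this
  set φ : MvPolynomial (Fin 2) F →ₐ[F] Polynomial F :=
    MvPolynomial.aeval ![Polynomial.X, (1 : Polynomial F)] with hφ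
  set L : Polynomial F := Polynomial.C a₁ * Polynomial.X + Polynomial.C a₂ with hLdef
  have hφP : φ P = L ^ d * φ h := by
    rw [hP, map_mul, map_pow]
    congr 1
    congr 1
    rw [map_add, map_mul, map_mul]
    simp [hφ, hLdef]
  have hφhne : φ h ≠ 0 := by
    obtain ⟨m, hm⟩ := MvPolynomial.support_nonempty.mpr hh
    have hsum : m 0 + m 1 = k := by
      have := hhom (MvPolynomial.mem_support_iff.mp hm)
      simpa [Finsupp.weight_apply, Finsupp.sum_fintype, Fin.sum_univ_two] using this
    intro h0
    have := coeff_phi h k hhom (m 0)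
    rw [hφ] at h0
    rw [h0, if_pos (by omega)] at this
    have hmeq : Finsupp.single 0 (m 0) + Finsupp.single 1 (k - m 0) = m := by
      have h1 : k - m 0 = m 1 := by omega
      rw [h1]; exact (fin2_finsupp_eq m).symm
    rw [hmeq] at this
    exact MvPolynomial.mem_support_iff.mp hm (by simpa using this.symm)
  have hφPne : φ P ≠ 0 := by
    rw [hφP]
    apply mul_ne_zero _ hφhne
    apply pow_ne_zero
    intro h0
    have : L.coeff 1 = a₁ := by simp [hLdef]
    rw [h0] at this
    simp at this
    exact ha₁ this.symm
  have hkey : d + 1 ≤ (φ P).support.card := by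
    rw [hφP] at hφPne ⊢
    exact key_univ a₁ a₂ ha₁ ha₂ d _ hφPne ⟨φ h, rfl⟩
  refine le_trans hkey (Finset.card_le_card ?_)
  intro i hi
  rw [Polynomial.mem_support_iff] at hi
  have hcoeff := coeff_phi P (d + k) hPhom i
  rw [hφ] at hi
  rw [hcoeff] at hi
  by_cases hin : i ≤ d + k
  · rw [if_pos hin] at hi
    rw [Finset.mem_filter, Finset.mem_range]
    exact ⟨by omega, hi⟩
  · rw [if_neg hin] at hi
    exact absurd rfl hi
end

section
/- Let G = ([n], E) be a simple graph with maximum degree Δ, and define f_G = Σ_{{i,j}∈E} x_i^{n_i(j)} x_j^{n_j(i)} + Σ_{i=1}^{n} x_i^{Δ+1} over a field F, where n_i(j) is the number of neighbours of i that are ≤ j. Then for every S ⊆ [n] with 1 ≤ |S| ≤ n−1, rank(M_S(f_G)) = |cut(S)| + 2. -/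
open MvPolynomial
open scoped Classical

/-- The Nisan matrix of `f` with respect to a variable subset `S`: rows indexed by
monomials supported on `S`, columns by monomials supported on the complement of `S`,
entries the coefficients of the product monomials in `f` (and `0` for index pairs not
respecting the support conditions). -/
noncomputable def nisanMatrix {F : Type*} [Field F] {n : ℕ}
    (f : MvPolynomial (Fin n) F) (S : Finset (Fin n)) :
    Matrix (Fin n →₀ ℕ) (Fin n →₀ ℕ) F :=
  Matrix.of fun m₁ m₂ =>
    if m₁.support ⊆ S ∧ m₂.support ⊆ Sᶜ then f.coeff (m₁ + m₂) else 0

/-- The rank of the Nisan matrix `M_S(f)`: the dimension of the span of its rows. -/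
noncomputable def nisanRank {F : Type*} [Field F] {n : ℕ}
    (f : MvPolynomial (Fin n) F) (S : Finset (Fin n)) : ℕ :=
  Module.finrank F (Submodule.span F (Set.range fun m₁ => nisanMatrix f S m₁))

variable {n : ℕ}

/-- `nbhdPos G i j` = the number of neighbours of `i` that are `≤ j` (the position of `j`
in the increasing list of neighbours of `i`, when `j` is a neighbour of `i`). -/
noncomputable def nbhdPos (G : SimpleGraph (Fin n)) (i j : Fin n) : ℕ :=
  ((G.neighborFinset i).filter fun v => v ≤ j).card

/-- The set of edges of `G` with exactly one endpoint in `S`. -/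
noncomputable def cutFinset (G : SimpleGraph (Fin n)) (S : Finset (Fin n)) :
    Finset (Sym2 (Fin n)) :=
  G.edgeFinset.filter fun e => ∃ i ∈ S, ∃ j ∉ S, e = s(i, j)

/-- The polynomial `f_G = Σ_{{i,j}∈E} x_i^{n_i(j)} x_j^{n_j(i)} + Σ_i x_i^{Δ+1}`,
where `Δ` is the maximum degree of `G`. -/
noncomputable def cutSumPoly (F : Type*) [Field F] (G : SimpleGraph (Fin n)) :
    MvPolynomial (Fin n) F :=
  (∑ e ∈ G.edgeFinset,
    Sym2.lift ⟨fun i j => X i ^ nbhdPos G i j * X j ^ nbhdPos G j i,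
      fun i j => by ring⟩ e) +
  ∑ i : Fin n, (X i : MvPolynomial (Fin n) F) ^ (G.maxDegree + 1)

section Aux
variable {G : SimpleGraph (Fin n)}

lemma nbhdPos_pos {i j : Fin n} (h : G.Adj i j) : 1 ≤ nbhdPos G i j := by
  rw [Nat.succ_le_iff]
  apply Finset.card_pos.mpr
  exact ⟨j, Finset.mem_filter.mpr ⟨(SimpleGraph.mem_neighborFinset G i j).mpr h, le_refl j⟩⟩

lemma nbhdPos_le (i j : Fin n) : nbhdPos G i j ≤ G.maxDegree :=
  le_trans (Finset.card_filter_le _ _) (G.degree_le_maxDegree i)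

lemma nbhdPos_inj {i j j' : Fin n} (hj : G.Adj i j) (hj' : G.Adj i j')
    (h : nbhdPos G i j = nbhdPos G i j') : j = j' := by
  have key : ∀ a b : Fin n, G.Adj i a → G.Adj i b → a ≤ b →
      nbhdPos G i a = nbhdPos G i b → a = b := by
    intro a b ha hb hab hcard
    have hsub : ((G.neighborFinset i).filter fun v => v ≤ a) ⊆
        ((G.neighborFinset i).filter fun v => v ≤ b) := by
      intro x hx
      rw [Finset.mem_filter] at hx ⊢
      exact ⟨hx.1, le_trans hx.2 hab⟩
    have heq := Finset.eq_of_subset_of_card_le hsub (le_of_eq hcard.symm)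
    have hbmem : b ∈ (G.neighborFinset i).filter fun v => v ≤ a := by
      rw [heq]
      exact Finset.mem_filter.mpr ⟨(SimpleGraph.mem_neighborFinset G i b).mpr hb, le_refl b⟩
    exact le_antisymm hab (Finset.mem_filter.mp hbmem).2
  rcases le_total j j' with hle | hle
  · exact key j j' hj hj' hle h
  · exact (key j' j hj' hj hle h.symm).symm

end Aux

noncomputable def edgeMonoAux (G : SimpleGraph (Fin n)) : Sym2 (Fin n) → (Fin n →₀ ℕ) :=
  Sym2.lift ⟨fun i j => Finsupp.single i (nbhdPos G i j) + Finsupp.single j (nbhdPos G j i),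
    fun i j => add_comm _ _⟩

section Aux2
variable {G : SimpleGraph (Fin n)}

lemma edgeMonoAux_mk (i j : Fin n) :
    edgeMonoAux G s(i, j) =
      Finsupp.single i (nbhdPos G i j) + Finsupp.single j (nbhdPos G j i) := rfl

lemma edgeMonoAux_apply (i j k : Fin n) :
    edgeMonoAux G s(i, j) k =
      (if i = k then nbhdPos G i j else 0) + (if j = k then nbhdPos G j i else 0) := by
  rw [edgeMonoAux_mk, Finsupp.add_apply, Finsupp.single_apply, Finsupp.single_apply]

lemma edgeMonoAux_apply_left {i j : Fin n} (hij : i ≠ j) :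
    edgeMonoAux G s(i, j) i = nbhdPos G i j := by
  rw [edgeMonoAux_apply]; simp [Ne.symm hij]

lemma edgeMonoAux_apply_right {i j : Fin n} (hij : i ≠ j) :
    edgeMonoAux G s(i, j) j = nbhdPos G j i := by
  rw [edgeMonoAux_apply]; simp [hij]

lemma edgeMonoAux_apply_ne {i j k : Fin n} (h1 : i ≠ k) (h2 : j ≠ k) :
    edgeMonoAux G s(i, j) k = 0 := by
  rw [edgeMonoAux_apply]; simp [h1, h2]

lemma edgeMonoAux_le {i j : Fin n} (hij : i ≠ j) (k : Fin n) :
    edgeMonoAux G s(i, j) k ≤ G.maxDegree := by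
  rcases eq_or_ne i k with h1 | h1
  · subst h1; rw [edgeMonoAux_apply_left (by exact fun h => hij h)]; exact nbhdPos_le _ _
  · rcases eq_or_ne j k with h2 | h2
    · subst h2; rw [edgeMonoAux_apply_right hij]; exact nbhdPos_le _ _
    · rw [edgeMonoAux_apply_ne h1 h2]; exact Nat.zero_le _

lemma edgeMonoAux_mem {i j k : Fin n} (hk : edgeMonoAux G s(i, j) k ≠ 0) : k = i ∨ k = j := by
  by_contra hc
  push_neg at hc
  exact hk (edgeMonoAux_apply_ne (Ne.symm hc.1) (Ne.symm hc.2))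

lemma single_mem {i k : Fin n} {c : ℕ} (h : Finsupp.single i c k ≠ 0) : i = k := by
  rw [Finsupp.single_apply] at h
  by_cases hik : i = k
  · exact hik
  · rw [if_neg hik] at h; exact absurd rfl h

lemma edgeMonoAux_inj {a b c d : Fin n} (h1 : G.Adj a b) (h2 : G.Adj c d)
    (h : edgeMonoAux G s(a, b) = edgeMonoAux G s(c, d)) : s(a, b) = s(c, d) := by
  have hab := h1.ne
  have hpa : edgeMonoAux G s(c, d) a ≠ 0 := by
    rw [← h, edgeMonoAux_apply_left hab]
    have := nbhdPos_pos h1; omega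
  have hpb : edgeMonoAux G s(c, d) b ≠ 0 := by
    rw [← h, edgeMonoAux_apply_right hab]
    have := nbhdPos_pos h1.symm; omega
  have ha := edgeMonoAux_mem hpa
  have hb := edgeMonoAux_mem hpb
  rw [Sym2.eq_iff]
  rcases ha with ha | ha
  · rcases hb with hb | hb
    · exact absurd (ha.trans hb.symm) hab
    · exact Or.inl ⟨ha, hb⟩
  · rcases hb with hb | hb
    · exact Or.inr ⟨ha, hb⟩
    · exact absurd (ha.trans hb.symm) hab

end Aux2

lemma cutSumPoly_eq (F : Type*) [Field F] (G : SimpleGraph (Fin n)) :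
    cutSumPoly F G =
      (∑ e ∈ G.edgeFinset, (monomial (edgeMonoAux G e) (1 : F))) +
      ∑ i : Fin n, (monomial (Finsupp.single i (G.maxDegree + 1)) (1 : F)) := by
  unfold cutSumPoly
  congr 1
  · apply Finset.sum_congr rfl
    intro e _
    induction e using Sym2.ind with
    | _ i j =>
      rw [Sym2.lift_mk, edgeMonoAux_mk]
      show X i ^ nbhdPos G i j * X j ^ nbhdPos G j i = _
      rw [X_pow_eq_monomial, X_pow_eq_monomial, monomial_mul, one_mul]
  · apply Finset.sum_congr rfl
    intro i _
    rw [X_pow_eq_monomial]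

lemma coeff_cutSumPoly_ne_zero {F : Type*} [Field F] {G : SimpleGraph (Fin n)} {m : Fin n →₀ ℕ}
    (h : coeff m (cutSumPoly F G) ≠ 0) :
    (∃ e ∈ G.edgeFinset, edgeMonoAux G e = m) ∨
      (∃ i : Fin n, Finsupp.single i (G.maxDegree + 1) = m) := by
  by_contra hc
  push_neg at hc
  apply h
  rw [cutSumPoly_eq, coeff_add, MvPolynomial.coeff_sum, MvPolynomial.coeff_sum]
  rw [Finset.sum_eq_zero, Finset.sum_eq_zero, add_zero]
  · intro i _; rw [coeff_monomial, if_neg (hc.2 i)]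
  · intro e he; rw [coeff_monomial, if_neg (hc.1 e he)]

lemma coeff_pow_cutSumPoly (F : Type*) [Field F] (G : SimpleGraph (Fin n)) (i : Fin n) :
    coeff (Finsupp.single i (G.maxDegree + 1)) (cutSumPoly F G) = 1 := by
  rw [cutSumPoly_eq, coeff_add, MvPolynomial.coeff_sum, MvPolynomial.coeff_sum]
  have h1 : (∑ e ∈ G.edgeFinset,
      coeff (Finsupp.single i (G.maxDegree + 1)) (monomial (edgeMonoAux G e) (1 : F))) = 0 := by
    apply Finset.sum_eq_zero
    intro e he
    rw [coeff_monomial, if_neg]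
    induction e using Sym2.ind with
    | _ a b =>
      intro heq
      have hadj : G.Adj a b := G.mem_edgeSet.mp (SimpleGraph.mem_edgeFinset.mp he)
      have hv : edgeMonoAux G s(a, b) a = Finsupp.single i (G.maxDegree + 1) a := by rw [heq]
      rw [edgeMonoAux_apply_left hadj.ne, Finsupp.single_apply] at hv
      have hp := nbhdPos_pos hadj
      have hl := nbhdPos_le (G := G) a b
      by_cases hia : i = a
      · rw [if_pos hia] at hv; omega
      · rw [if_neg hia] at hv; omega
  have h2 : (∑ i' : Fin n, coeff (Finsupp.single i (G.maxDegree + 1))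
      (monomial (Finsupp.single i' (G.maxDegree + 1)) (1 : F))) = 1 := by
    rw [Finset.sum_eq_single i]
    · rw [coeff_monomial, if_pos rfl]
    · intro i' _ hne
      rw [coeff_monomial, if_neg]
      intro heq
      exact hne (Finsupp.single_left_injective (by omega) heq)
    · intro h; exact absurd (Finset.mem_univ i) h
  rw [h1, h2, zero_add]

lemma coeff_edge_cutSumPoly (F : Type*) [Field F] {G : SimpleGraph (Fin n)} {a b : Fin n}
    (hadj : G.Adj a b) :
    coeff (edgeMonoAux G s(a, b)) (cutSumPoly F G) = 1 := by
  rw [cutSumPoly_eq, coeff_add, MvPolynomial.coeff_sum, MvPolynomial.coeff_sum]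
  have hab : a ≠ b := hadj.ne
  have h2 : (∑ i : Fin n, coeff (edgeMonoAux G s(a, b))
      (monomial (Finsupp.single i (G.maxDegree + 1)) (1 : F))) = 0 := by
    apply Finset.sum_eq_zero
    intro i _
    rw [coeff_monomial, if_neg]
    intro heq
    have hv : Finsupp.single i (G.maxDegree + 1) a = edgeMonoAux G s(a, b) a := by rw [heq]
    rw [edgeMonoAux_apply_left hab, Finsupp.single_apply] at hv
    have hp := nbhdPos_pos hadj
    have hl := nbhdPos_le (G := G) a b
    by_cases hia : i = a
    · rw [if_pos hia] at hv; omega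
    · rw [if_neg hia] at hv; omega
  have h1 : (∑ e ∈ G.edgeFinset,
      coeff (edgeMonoAux G s(a, b)) (monomial (edgeMonoAux G e) (1 : F))) = 1 := by
    rw [Finset.sum_eq_single s(a, b)]
    · rw [coeff_monomial, if_pos rfl]
    · intro e he hne
      rw [coeff_monomial, if_neg]
      induction e using Sym2.ind with
      | _ c d =>
        intro heq
        have hcd : G.Adj c d := G.mem_edgeSet.mp (SimpleGraph.mem_edgeFinset.mp he)
        exact hne (edgeMonoAux_inj hcd hadj heq)
    · intro hne
      exact absurd (SimpleGraph.mem_edgeFinset.mpr (G.mem_edgeSet.mpr hadj)) hne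
  rw [h1, h2, add_zero]

section Rows

variable {F : Type*} [Field F] {G : SimpleGraph (Fin n)} {S : Finset (Fin n)}

lemma nisanMatrix_apply (f : MvPolynomial (Fin n) F) (S : Finset (Fin n)) (m₁ m₂ : Fin n →₀ ℕ) :
    nisanMatrix f S m₁ m₂ =
      if m₁.support ⊆ S ∧ m₂.support ⊆ Sᶜ then f.coeff (m₁ + m₂) else 0 := rfl

lemma supp_single_subset_of_mem {i : Fin n} {c : ℕ} {T : Finset (Fin n)} (h : i ∈ T) :
    (Finsupp.single i c).support ⊆ T :=
  (Finsupp.support_single_subset).trans (Finset.singleton_subset_iff.mpr h)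

lemma apply_eq_zero_of_support_subset {m : Fin n →₀ ℕ} {T : Finset (Fin n)} (h : m.support ⊆ T)
    {k : Fin n} (hk : k ∉ T) : m k = 0 := by
  by_contra hc
  exact hk (h (Finsupp.mem_support_iff.mpr hc))

lemma m2_apply_zero {m₂ : Fin n →₀ ℕ} (hs : m₂.support ⊆ Sᶜ) {k : Fin n} (hk : k ∈ S) :
    m₂ k = 0 :=
  apply_eq_zero_of_support_subset hs (fun hmem => (Finset.mem_compl.mp hmem) hk)

/-- Row of a power monomial `x_i^{Δ+1}` with `i ∈ S`. -/
lemma row_pow {i : Fin n} (hi : i ∈ S) :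
    nisanMatrix (cutSumPoly F G) S (Finsupp.single i (G.maxDegree + 1)) =
      fun m₂ => if m₂ = 0 then 1 else 0 := by
  funext m₂
  rw [nisanMatrix_apply]
  by_cases hs : m₂.support ⊆ Sᶜ
  · rw [if_pos ⟨supp_single_subset_of_mem hi, hs⟩]
    by_cases h0 : m₂ = 0
    · subst h0; rw [add_zero, coeff_pow_cutSumPoly, if_pos rfl]
    · rw [if_neg h0]
      by_contra hc
      rcases coeff_cutSumPoly_ne_zero hc with ⟨e, he, heq⟩ | ⟨i', heq⟩
      · induction e using Sym2.ind with
        | _ a b =>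
          have hadj : G.Adj a b := G.mem_edgeSet.mp (SimpleGraph.mem_edgeFinset.mp he)
          have hv : edgeMonoAux G s(a, b) i = G.maxDegree + 1 := by
            rw [heq, Finsupp.add_apply, Finsupp.single_apply, if_pos rfl,
              m2_apply_zero hs hi]
          have := edgeMonoAux_le (G := G) hadj.ne i
          omega
      · have hv : Finsupp.single i' (G.maxDegree + 1) i = G.maxDegree + 1 := by
          rw [heq, Finsupp.add_apply, Finsupp.single_apply, if_pos rfl, m2_apply_zero hs hi]
        have hii : i' = i := by
          rw [Finsupp.single_apply] at hv
          by_cases h : i' = i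
          · exact h
          · rw [if_neg h] at hv; omega
        subst hii
        apply h0
        have hcan : Finsupp.single i' (G.maxDegree + 1) + m₂ =
            Finsupp.single i' (G.maxDegree + 1) + 0 := by rw [add_zero, ← heq]
        exact add_left_cancel hcan
  · rw [if_neg (fun hand => hs hand.2), if_neg]
    intro h0
    subst h0
    exact hs (by simp)

/-- Row of an edge monomial for an edge inside `S`. -/
lemma row_edge_in {a b : Fin n} (hadj : G.Adj a b) (ha : a ∈ S) (hb : b ∈ S) :
    nisanMatrix (cutSumPoly F G) S (edgeMonoAux G s(a, b)) =
      fun m₂ => if m₂ = 0 then (1 : F) else 0 := by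
  have hab : a ≠ b := hadj.ne
  have hsupp : (edgeMonoAux G s(a, b)).support ⊆ S := by
    rw [edgeMonoAux_mk]
    refine (Finsupp.support_add).trans (Finset.union_subset ?_ ?_)
    · exact supp_single_subset_of_mem ha
    · exact supp_single_subset_of_mem hb
  funext m₂
  rw [nisanMatrix_apply]
  by_cases hs : m₂.support ⊆ Sᶜ
  · rw [if_pos ⟨hsupp, hs⟩]
    by_cases h0 : m₂ = 0
    · subst h0; rw [add_zero, coeff_edge_cutSumPoly F hadj, if_pos rfl]
    · rw [if_neg h0]
      by_contra hc
      obtain ⟨k, hk⟩ := Finsupp.support_nonempty_iff.mpr h0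
      have hkS : k ∉ S := Finset.mem_compl.mp (hs hk)
      have hka : k ≠ a := fun h => hkS (h ▸ ha)
      have hkb : k ≠ b := fun h => hkS (h ▸ hb)
      have hsum_a : (edgeMonoAux G s(a, b) + m₂) a ≠ 0 := by
        rw [Finsupp.add_apply, edgeMonoAux_apply_left hab]
        have := nbhdPos_pos hadj; omega
      have hsum_b : (edgeMonoAux G s(a, b) + m₂) b ≠ 0 := by
        rw [Finsupp.add_apply, edgeMonoAux_apply_right hab]
        have := nbhdPos_pos hadj.symm; omega
      have hsum_k : (edgeMonoAux G s(a, b) + m₂) k ≠ 0 := by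
        rw [Finsupp.add_apply, edgeMonoAux_apply_ne (Ne.symm hka) (Ne.symm hkb), zero_add]
        exact Finsupp.mem_support_iff.mp hk
      rcases coeff_cutSumPoly_ne_zero hc with ⟨e, he, heq⟩ | ⟨i', heq⟩
      · induction e using Sym2.ind with
        | _ c d =>
          rw [← heq] at hsum_a hsum_b hsum_k
          rcases edgeMonoAux_mem hsum_a with h1 | h1 <;>
            rcases edgeMonoAux_mem hsum_b with h2 | h2 <;>
              rcases edgeMonoAux_mem hsum_k with h3 | h3 <;>
                first
                  | exact hab (h1.trans h2.symm)
                  | exact hka (h3.trans h1.symm)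
                  | exact hkb (h3.trans h2.symm)
      · rw [← heq] at hsum_a hsum_b
        exact hab ((single_mem hsum_a).symm.trans (single_mem hsum_b))
  · rw [if_neg (fun hand => hs hand.2), if_neg]
    intro h0
    subst h0
    exact hs (by simp)

/-- Row of the `S`-part of a cut-edge monomial. -/
lemma row_cut {i j : Fin n} (hadj : G.Adj i j) (hi : i ∈ S) (hj : j ∉ S) :
    nisanMatrix (cutSumPoly F G) S (Finsupp.single i (nbhdPos G i j)) =
      fun m₂ => if m₂ = Finsupp.single j (nbhdPos G j i) then (1 : F) else 0 := by
  have hij : i ≠ j := hadj.ne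
  funext m₂
  rw [nisanMatrix_apply]
  by_cases hs : m₂.support ⊆ Sᶜ
  · rw [if_pos ⟨supp_single_subset_of_mem hi, hs⟩]
    by_cases h0 : m₂ = Finsupp.single j (nbhdPos G j i)
    · subst h0
      rw [if_pos rfl, ← edgeMonoAux_mk, coeff_edge_cutSumPoly F hadj]
    · rw [if_neg h0]
      by_contra hc
      have hvi : (Finsupp.single i (nbhdPos G i j) + m₂) i = nbhdPos G i j := by
        rw [Finsupp.add_apply, Finsupp.single_apply, if_pos rfl, m2_apply_zero hs hi,
          add_zero]
      rcases coeff_cutSumPoly_ne_zero hc with ⟨e, he, heq⟩ | ⟨i', heq⟩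
      · induction e using Sym2.ind with
        | _ c d =>
          have hcd : G.Adj c d := G.mem_edgeSet.mp (SimpleGraph.mem_edgeFinset.mp he)
          have main : ∀ c' d' : Fin n, G.Adj c' d' →
              edgeMonoAux G s(c', d') = Finsupp.single i (nbhdPos G i j) + m₂ →
              i = c' → False := by
            intro c' d' hcd' heq' hic
            subst hic
            have hid : i ≠ d' := hcd'.ne
            have hv : nbhdPos G i d' = nbhdPos G i j := by
              have h := DFunLike.congr_fun heq' i
              rw [edgeMonoAux_apply_left hid, hvi] at h
              exact h
            have hdj : d' = j := nbhdPos_inj hcd' hadj hv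
            subst hdj
            apply h0
            have : Finsupp.single i (nbhdPos G i d') + Finsupp.single d' (nbhdPos G d' i) =
                Finsupp.single i (nbhdPos G i d') + m₂ := by
              rw [← edgeMonoAux_mk, heq']
            exact (add_left_cancel this).symm
          have hne : edgeMonoAux G s(c, d) i ≠ 0 := by
            rw [heq, hvi]
            have := nbhdPos_pos hadj; omega
          rcases edgeMonoAux_mem hne with h1 | h1
          · exact main c d hcd heq h1
          · apply main d c hcd.symm _ h1
            rw [← heq, Sym2.eq_swap]
      · have hv : Finsupp.single i' (G.maxDegree + 1) i = nbhdPos G i j := by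
          rw [heq, hvi]
        rw [Finsupp.single_apply] at hv
        have hp := nbhdPos_pos hadj
        have hl := nbhdPos_le (G := G) i j
        by_cases hia : i' = i
        · rw [if_pos hia] at hv; omega
        · rw [if_neg hia] at hv; omega
  · rw [if_neg (fun hand => hs hand.2), if_neg]
    intro h0
    subst h0
    exact hs (supp_single_subset_of_mem (Finset.mem_compl.mpr hj))

lemma row_zero_apply_zero :
    nisanMatrix (cutSumPoly F G) S 0 0 = 0 := by
  rw [nisanMatrix_apply, if_pos ⟨by simp, by simp⟩, add_zero]
  by_contra hc
  rcases coeff_cutSumPoly_ne_zero hc with ⟨e, he, heq⟩ | ⟨i, heq⟩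
  · induction e using Sym2.ind with
    | _ a b =>
      have hadj : G.Adj a b := G.mem_edgeSet.mp (SimpleGraph.mem_edgeFinset.mp he)
      have hv : edgeMonoAux G s(a, b) a = 0 := by rw [heq]; rfl
      rw [edgeMonoAux_apply_left hadj.ne] at hv
      have := nbhdPos_pos hadj; omega
  · have hv : Finsupp.single i (G.maxDegree + 1) i = 0 := by rw [heq]; rfl
    rw [Finsupp.single_apply, if_pos rfl] at hv
    omega

lemma row_zero_apply_pow {j : Fin n} (hj : j ∉ S) :
    nisanMatrix (cutSumPoly F G) S 0 (Finsupp.single j (G.maxDegree + 1)) = 1 := by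
  rw [nisanMatrix_apply,
    if_pos ⟨by simp, supp_single_subset_of_mem (Finset.mem_compl.mpr hj)⟩, zero_add,
    coeff_pow_cutSumPoly]

lemma row_zero_apply_cut {j : Fin n} {c : ℕ} (hj : j ∉ S) (h1 : 1 ≤ c) (h2 : c ≤ G.maxDegree) :
    nisanMatrix (cutSumPoly F G) S 0 (Finsupp.single j c) = 0 := by
  rw [nisanMatrix_apply,
    if_pos ⟨by simp, supp_single_subset_of_mem (Finset.mem_compl.mpr hj)⟩, zero_add]
  by_contra hc
  rcases coeff_cutSumPoly_ne_zero hc with ⟨e, he, heq⟩ | ⟨i, heq⟩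
  · induction e using Sym2.ind with
    | _ a b =>
      have hadj : G.Adj a b := G.mem_edgeSet.mp (SimpleGraph.mem_edgeFinset.mp he)
      have hva : edgeMonoAux G s(a, b) a ≠ 0 := by
        rw [edgeMonoAux_apply_left hadj.ne]
        have := nbhdPos_pos hadj; omega
      have hvb : edgeMonoAux G s(a, b) b ≠ 0 := by
        rw [edgeMonoAux_apply_right hadj.ne]
        have := nbhdPos_pos hadj.symm; omega
      rw [heq] at hva hvb
      exact hadj.ne ((single_mem hva).symm.trans (single_mem hvb))
  · have hv : Finsupp.single j c i = G.maxDegree + 1 := by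
      rw [← heq, Finsupp.single_apply, if_pos rfl]
    rw [Finsupp.single_apply] at hv
    by_cases hji : j = i
    · rw [if_pos hji] at hv; omega
    · rw [if_neg hji] at hv; omega

/-- Classification of all rows of the Nisan matrix of `cutSumPoly`. -/
lemma row_classify (m₁ : Fin n →₀ ℕ) :
    nisanMatrix (cutSumPoly F G) S m₁ = 0 ∨
    nisanMatrix (cutSumPoly F G) S m₁ = nisanMatrix (cutSumPoly F G) S 0 ∨
    nisanMatrix (cutSumPoly F G) S m₁ = (fun m₂ => if m₂ = 0 then (1 : F) else 0) ∨
    ∃ i ∈ S, ∃ j ∉ S, G.Adj i j ∧ m₁ = Finsupp.single i (nbhdPos G i j) := by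
  by_cases hsupp : m₁.support ⊆ S
  · by_cases h0 : m₁ = 0
    · subst h0; exact Or.inr (Or.inl rfl)
    · by_cases hrow : nisanMatrix (cutSumPoly F G) S m₁ = 0
      · exact Or.inl hrow
      · obtain ⟨m₂, hm₂⟩ := Function.ne_iff.mp hrow
        have hm₂' : nisanMatrix (cutSumPoly F G) S m₁ m₂ ≠ 0 := hm₂
        rw [nisanMatrix_apply] at hm₂'
        by_cases hcond : m₁.support ⊆ S ∧ m₂.support ⊆ Sᶜ
        · rw [if_pos hcond] at hm₂'
          have hs := hcond.2
          have hm1out : ∀ k, k ∉ S → m₁ k = 0 := fun k hk =>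
            apply_eq_zero_of_support_subset hsupp hk
          rcases coeff_cutSumPoly_ne_zero hm₂' with ⟨e, he, heq⟩ | ⟨i, heq⟩
          · induction e using Sym2.ind with
            | _ a b =>
              have hadj : G.Adj a b := G.mem_edgeSet.mp (SimpleGraph.mem_edgeFinset.mp he)
              have hab : a ≠ b := hadj.ne
              have hkey : ∀ k ∈ S, m₁ k = edgeMonoAux G s(a, b) k := by
                intro k hk
                have h := DFunLike.congr_fun heq k
                rw [Finsupp.add_apply, m2_apply_zero hs hk, add_zero] at h
                exact h.symm
              by_cases haS : a ∈ S
              · by_cases hbS : b ∈ S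
                · -- internal edge
                  have : m₁ = edgeMonoAux G s(a, b) := by
                    apply Finsupp.ext
                    intro k
                    by_cases hk : k ∈ S
                    · exact hkey k hk
                    · rw [hm1out k hk, edgeMonoAux_apply_ne
                        (fun (h : a = k) => hk (h ▸ haS)) (fun (h : b = k) => hk (h ▸ hbS))]
                  rw [this]
                  exact Or.inr (Or.inr (Or.inl (row_edge_in hadj haS hbS)))
                · -- cut edge a ∈ S, b ∉ S
                  refine Or.inr (Or.inr (Or.inr ⟨a, haS, b, hbS, hadj, ?_⟩))
                  apply Finsupp.ext
                  intro k
                  by_cases hk : k ∈ S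
                  · rw [hkey k hk, edgeMonoAux_apply, Finsupp.single_apply]
                    rw [if_neg (fun (h : b = k) => hbS (h ▸ hk)), add_zero]
                  · rw [hm1out k hk, Finsupp.single_apply,
                      if_neg (fun (h : a = k) => hk (h ▸ haS))]
              · by_cases hbS : b ∈ S
                · -- cut edge b ∈ S, a ∉ S
                  refine Or.inr (Or.inr (Or.inr ⟨b, hbS, a, haS, hadj.symm, ?_⟩))
                  apply Finsupp.ext
                  intro k
                  by_cases hk : k ∈ S
                  · rw [hkey k hk, edgeMonoAux_apply, Finsupp.single_apply]
                    rw [if_neg (fun (h : a = k) => haS (h ▸ hk)), zero_add]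
                  · rw [hm1out k hk, Finsupp.single_apply,
                      if_neg (fun (h : b = k) => hk (h ▸ hbS))]
                · -- external edge : m₁ = 0, contradiction
                  exfalso
                  apply h0
                  apply Finsupp.ext
                  intro k
                  by_cases hk : k ∈ S
                  · rw [hkey k hk, edgeMonoAux_apply_ne
                      (fun (h : a = k) => haS (h ▸ hk)) (fun (h : b = k) => hbS (h ▸ hk))]
                    rfl
                  · rw [hm1out k hk]; rfl
          · -- power monomial
            by_cases hiS : i ∈ S
            · have : m₁ = Finsupp.single i (G.maxDegree + 1) := by
                apply Finsupp.ext
                intro k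
                by_cases hk : k ∈ S
                · have h := DFunLike.congr_fun heq k
                  rw [Finsupp.add_apply, m2_apply_zero hs hk, add_zero] at h
                  exact h.symm
                · rw [hm1out k hk, Finsupp.single_apply, if_neg (fun (h : i = k) => hk (h ▸ hiS))]
              rw [this]
              exact Or.inr (Or.inr (Or.inl (row_pow hiS)))
            · exfalso
              apply h0
              apply Finsupp.ext
              intro k
              by_cases hk : k ∈ S
              · have h := DFunLike.congr_fun heq k
                rw [Finsupp.add_apply, m2_apply_zero hs hk, add_zero,
                  Finsupp.single_apply, if_neg (fun (h' : i = k) => hiS (h' ▸ hk))] at h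
                exact h.symm
              · rw [hm1out k hk]; rfl
        · rw [if_neg hcond] at hm₂'
          exact absurd rfl hm₂'
  · left
    funext m₂
    rw [nisanMatrix_apply, if_neg (fun hand => hsupp hand.1)]
    rfl

end Rows

/-- The family of `|cut(S)| + 2` vectors spanning the rows. -/
noncomputable def bFam (F : Type*) [Field F] (G : SimpleGraph (Fin n)) (S : Finset (Fin n))
    (P : Finset (Fin n × Fin n)) : ({p // p ∈ P} ⊕ Bool) → ((Fin n →₀ ℕ) → F)
  | Sum.inl p => fun m₂ => if m₂ = Finsupp.single p.1.2 (nbhdPos G p.1.2 p.1.1) then 1 else 0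
  | Sum.inr true => fun m₂ => if m₂ = 0 then 1 else 0
  | Sum.inr false => nisanMatrix (cutSumPoly F G) S 0

lemma bFam_inl {F : Type*} [Field F] (G : SimpleGraph (Fin n)) (S : Finset (Fin n))
    (P : Finset (Fin n × Fin n)) (p : {p // p ∈ P}) :
    bFam F G S P (Sum.inl p) =
      fun m₂ => if m₂ = Finsupp.single p.1.2 (nbhdPos G p.1.2 p.1.1) then 1 else 0 := rfl

lemma bFam_true {F : Type*} [Field F] (G : SimpleGraph (Fin n)) (S : Finset (Fin n))
    (P : Finset (Fin n × Fin n)) :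
    bFam F G S P (Sum.inr true) = fun m₂ => if m₂ = 0 then (1 : F) else 0 := rfl

lemma bFam_false {F : Type*} [Field F] (G : SimpleGraph (Fin n)) (S : Finset (Fin n))
    (P : Finset (Fin n × Fin n)) :
    bFam F G S P (Sum.inr false) = nisanMatrix (cutSumPoly F G) S 0 := rfl

/-- for a simple graph `G` on `[n]` with maximum degree `Δ` and every
`S ⊆ [n]` with `1 ≤ |S| ≤ n-1`, the Nisan matrix of
`f_G = Σ_{{i,j}∈E} x_i^{n_i(j)} x_j^{n_j(i)} + Σ_i x_i^{Δ+1}` with respect to `S`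
has rank `|cut(S)| + 2`. -/
theorem nisanRank_cutSumPoly
    {F : Type*} [Field F] (G : SimpleGraph (Fin n)) (S : Finset (Fin n))
    (h1 : 1 ≤ S.card) (h2 : S.card ≤ n - 1) :
    nisanRank (cutSumPoly F G) S = (cutFinset G S).card + 2 := by
  set P : Finset (Fin n × Fin n) := (S ×ˢ Sᶜ).filter (fun p => G.Adj p.1 p.2) with hP
  have hPmem : ∀ p : Fin n × Fin n, p ∈ P ↔ p.1 ∈ S ∧ p.2 ∉ S ∧ G.Adj p.1 p.2 := by
    intro p
    rw [hP, Finset.mem_filter, Finset.mem_product, Finset.mem_compl]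
    tauto
  -- card equality
  have hcard : P.card = (cutFinset G S).card := by
    apply Finset.card_bij (fun p _ => s(p.1, p.2))
    · intro p hp
      rw [hPmem] at hp
      rw [cutFinset, Finset.mem_filter]
      exact ⟨SimpleGraph.mem_edgeFinset.mpr (G.mem_edgeSet.mpr hp.2.2),
        p.1, hp.1, p.2, hp.2.1, rfl⟩
    · intro p hp q hq hpq
      rw [hPmem] at hp hq
      rw [Sym2.eq_iff] at hpq
      rcases hpq with ⟨ha, hb⟩ | ⟨ha, hb⟩
      · exact Prod.ext ha hb
      · exact absurd (ha ▸ hp.1) hq.2.1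
    · intro e he
      rw [cutFinset, Finset.mem_filter] at he
      obtain ⟨hee, i, hi, j, hj, rfl⟩ := he
      refine ⟨(i, j), ?_, rfl⟩
      rw [hPmem]
      exact ⟨hi, hj, G.mem_edgeSet.mp (SimpleGraph.mem_edgeFinset.mp hee)⟩
  obtain ⟨i₀, hi₀⟩ := Finset.card_pos.mp h1
  have hn1 : S.card < n := by
    have hle : S.card ≤ n := by
      have := Finset.card_le_univ S
      simpa using this
    omega
  have hScn : Sᶜ.Nonempty := by
    rw [← Finset.card_pos, Finset.card_compl]
    simp only [Fintype.card_fin]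
    omega
  obtain ⟨j₀, hj₀'⟩ := hScn
  have hj₀ : j₀ ∉ S := Finset.mem_compl.mp hj₀'
  -- span equality
  have hspan : Submodule.span F (Set.range fun m₁ => nisanMatrix (cutSumPoly F G) S m₁) =
      Submodule.span F (Set.range (bFam F G S P)) := by
    apply le_antisymm
    · rw [Submodule.span_le]
      rintro - ⟨m₁, rfl⟩
      show nisanMatrix (cutSumPoly F G) S m₁ ∈ Submodule.span F (Set.range (bFam F G S P))
      rcases row_classify (F := F) (G := G) (S := S) m₁ with h | h | h | ⟨i, hi, j, hj, hadj, rfl⟩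
      · rw [h]; exact Submodule.zero_mem _
      · rw [h]; exact Submodule.subset_span ⟨Sum.inr false, rfl⟩
      · rw [h]; exact Submodule.subset_span ⟨Sum.inr true, rfl⟩
      · have hmem : (i, j) ∈ P := (hPmem (i, j)).mpr ⟨hi, hj, hadj⟩
        rw [row_cut hadj hi hj]
        exact Submodule.subset_span ⟨Sum.inl ⟨(i, j), hmem⟩, rfl⟩
    · rw [Submodule.span_le]
      rintro - ⟨x, rfl⟩
      rcases x with p | t
      · obtain ⟨hi, hj, hadj⟩ := (hPmem p.1).mp p.2
        apply Submodule.subset_span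
        exact ⟨Finsupp.single p.1.1 (nbhdPos G p.1.1 p.1.2), row_cut hadj hi hj⟩
      · cases t with
        | false => exact Submodule.subset_span ⟨0, rfl⟩
        | true => exact Submodule.subset_span ⟨Finsupp.single i₀ (G.maxDegree + 1), row_pow hi₀⟩
  -- linear independence
  have hli : LinearIndependent F (bFam F G S P) := by
    rw [Fintype.linearIndependent_iff]
    intro g hg
    have happ : ∀ m₂, (∑ x, g x * bFam F G S P x m₂) = 0 := by
      intro m₂
      have := congrFun hg m₂
      rw [Finset.sum_apply] at this
      simpa using this
    have hgtrue : g (Sum.inr true) = 0 := by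
      have h := happ 0
      rw [Finset.sum_eq_single (Sum.inr true)] at h
      · rw [bFam_true] at h
        simpa using h
      · intro x _ hx
        rcases x with p | t
        · obtain ⟨hi, hj, hadj⟩ := (hPmem p.1).mp p.2
          have : bFam F G S P (Sum.inl p) 0 = 0 := by
            rw [bFam_inl]
            apply if_neg
            intro hcon
            have := DFunLike.congr_fun hcon p.1.2
            rw [Finsupp.single_apply, if_pos rfl] at this
            have hpos := nbhdPos_pos hadj.symm
            simp at this
            omega
          rw [this, mul_zero]
        · cases t with
          | false =>
            rw [bFam_false, row_zero_apply_zero, mul_zero]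
          | true => exact absurd rfl hx
      · intro hmem; exact absurd (Finset.mem_univ _) hmem
    have hgfalse : g (Sum.inr false) = 0 := by
      have h := happ (Finsupp.single j₀ (G.maxDegree + 1))
      rw [Finset.sum_eq_single (Sum.inr false)] at h
      · rw [bFam_false, row_zero_apply_pow hj₀, mul_one] at h
        exact h
      · intro x _ hx
        rcases x with p | t
        · obtain ⟨hi, hj, hadj⟩ := (hPmem p.1).mp p.2
          have : bFam F G S P (Sum.inl p) (Finsupp.single j₀ (G.maxDegree + 1)) = 0 := by
            rw [bFam_inl]
            apply if_neg
            intro hcon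
            have hval := DFunLike.congr_fun hcon j₀
            rw [Finsupp.single_apply, if_pos rfl, Finsupp.single_apply] at hval
            have hle := nbhdPos_le (G := G) p.1.2 p.1.1
            by_cases hj2 : p.1.2 = j₀
            · rw [if_pos hj2] at hval; omega
            · rw [if_neg hj2] at hval; omega
          rw [this, mul_zero]
        · cases t with
          | false => exact absurd rfl hx
          | true =>
            have : bFam F G S P (Sum.inr true) (Finsupp.single j₀ (G.maxDegree + 1)) = 0 := by
              rw [bFam_true]
              apply if_neg
              intro hcon
              have hval := DFunLike.congr_fun hcon j₀
              rw [Finsupp.single_apply, if_pos rfl] at hval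
              simp at hval
            rw [this, mul_zero]
      · intro hmem; exact absurd (Finset.mem_univ _) hmem
    have hginl : ∀ p : {p // p ∈ P}, g (Sum.inl p) = 0 := by
      intro p
      obtain ⟨hi, hj, hadj⟩ := (hPmem p.1).mp p.2
      have h := happ (Finsupp.single p.1.2 (nbhdPos G p.1.2 p.1.1))
      rw [Finset.sum_eq_single (Sum.inl p)] at h
      · rw [bFam_inl] at h
        simpa using h
      · intro x _ hx
        rcases x with q | t
        · obtain ⟨hqi, hqj, hqadj⟩ := (hPmem q.1).mp q.2
          have : bFam F G S P (Sum.inl q)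
              (Finsupp.single p.1.2 (nbhdPos G p.1.2 p.1.1)) = 0 := by
            rw [bFam_inl]
            apply if_neg
            intro hcon
            -- single p.1.2 c = single q.1.2 c'
            have hpq2 : q.1.2 = p.1.2 := by
              apply single_mem (c := nbhdPos G q.1.2 q.1.1)
              rw [← hcon, Finsupp.single_apply, if_pos rfl]
              have := nbhdPos_pos hadj.symm; omega
            have hvv := DFunLike.congr_fun hcon p.1.2
            rw [Finsupp.single_apply, if_pos rfl, Finsupp.single_apply, if_pos hpq2] at hvv
            rw [hpq2] at hvv
            have hq2adj : G.Adj p.1.2 q.1.1 := by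
              have hq := hqadj.symm
              rwa [hpq2] at hq
            have hpq1 : p.1.1 = q.1.1 := nbhdPos_inj hadj.symm hq2adj hvv
            apply hx
            congr 1
            apply Subtype.ext
            exact Prod.ext hpq1.symm hpq2
          rw [this, mul_zero]
        · cases t with
          | false =>
            have : bFam F G S P (Sum.inr false)
                (Finsupp.single p.1.2 (nbhdPos G p.1.2 p.1.1)) = 0 := by
              rw [bFam_false]
              exact row_zero_apply_cut hj (nbhdPos_pos hadj.symm) (nbhdPos_le _ _)
            rw [this, mul_zero]
          | true =>
            have : bFam F G S P (Sum.inr true)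
                (Finsupp.single p.1.2 (nbhdPos G p.1.2 p.1.1)) = 0 := by
              rw [bFam_true]
              apply if_neg
              intro hcon
              have hval := DFunLike.congr_fun hcon p.1.2
              rw [Finsupp.single_apply, if_pos rfl] at hval
              have := nbhdPos_pos hadj.symm
              simp at hval
              omega
            rw [this, mul_zero]
      · intro hmem; exact absurd (Finset.mem_univ _) hmem
    intro x
    rcases x with p | t
    · exact hginl p
    · cases t with
      | false => exact hgfalse
      | true => exact hgtrue
  rw [nisanRank, hspan, finrank_span_eq_card hli, Fintype.card_sum, Fintype.card_coe,
    Fintype.card_bool, hcard]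
end

section
/- Let F be any field and G = ([n], E) a simple graph. Define the quadratic form f_G = Σ_{{i,j}∈E} x_i x_j + Σ_{i=1}^{n} x_i^2 over F. Then for every S ⊆ [n] with 1 ≤ |S| ≤ n−1, rank(M_S(f_G)) = cutrank_F(S) + 2, where cutrank_F(S) is the rank over F of the |S| × |[n]∖S| 0-1 adjacency matrix between S and its complement. -/
open MvPolynomial
open scoped Classical

/-- The cut-rank of `S` in `G` over `F`: the rank of the 0-1 adjacency matrix between
`S` and its complement. -/
noncomputable def cutRank (F : Type*) [Field F] {n : ℕ}
    (G : SimpleGraph (Fin n)) (S : Finset (Fin n)) : ℕ :=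
  Matrix.rank (Matrix.of fun (u : {i : Fin n // i ∈ S}) (v : {i : Fin n // i ∉ S}) =>
    if G.Adj u.val v.val then (1 : F) else 0)

section Aux

variable {F : Type*} [Field F] {n : ℕ}

noncomputable def qf (F : Type*) [Field F] {n : ℕ} (G : SimpleGraph (Fin n)) :
    MvPolynomial (Fin n) F :=
  (∑ e ∈ G.edgeFinset, Sym2.lift ⟨fun i j => X i * X j, fun i j => by ring⟩ e) +
    ∑ i : Fin n, (X i : MvPolynomial (Fin n) F) ^ 2

lemma aux_coeff_XX (a b : Fin n) (d : Fin n →₀ ℕ) :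
    coeff d (X a * X b : MvPolynomial (Fin n) F)
      = if Finsupp.single a 1 + Finsupp.single b 1 = d then 1 else 0 := by
  rw [show (X a * X b : MvPolynomial (Fin n) F)
      = monomial (Finsupp.single a 1 + Finsupp.single b 1) 1 by
    rw [X, X, monomial_mul, one_mul], coeff_monomial]

lemma pair_eq {i j a b : Fin n} (hab : a ≠ b)
    (h : Finsupp.single a 1 + Finsupp.single b 1
        = Finsupp.single i (1 : ℕ) + Finsupp.single j 1) :
    (a = i ∧ b = j) ∨ (a = j ∧ b = i) := by
  have key : ∀ x : Fin n, ((if a = x then 1 else 0) + if b = x then 1 else 0)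
      = ((if i = x then (1:ℕ) else 0) + if j = x then 1 else 0) := by
    intro x
    have := DFunLike.congr_fun h x
    simpa [Finsupp.single_apply] using this
  have ha := key a
  have hb := key b
  have h1 : a = i ∨ a = j := by
    by_contra hc
    push_neg at hc
    simp [hc.1.symm, hc.2.symm, (Ne.symm hab)] at ha
  have h2 : b = i ∨ b = j := by
    by_contra hc
    push_neg at hc
    simp [hc.1.symm, hc.2.symm, hab] at hb
  rcases h1 with h1 | h1 <;> rcases h2 with h2 | h2
  · exact absurd (h1.trans h2.symm) hab
  · exact Or.inl ⟨h1, h2⟩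
  · exact Or.inr ⟨h1, h2⟩
  · exact absurd (h1.trans h2.symm) hab

lemma single_two_ne_pair {i a b : Fin n} (hab : a ≠ b) :
    Finsupp.single a 1 + Finsupp.single b 1 ≠ Finsupp.single i 2 := by
  intro h
  have := DFunLike.congr_fun h a
  simp [Finsupp.single_apply, Ne.symm hab] at this
  split_ifs at this with h' <;> omega

lemma qf_hom (G : SimpleGraph (Fin n)) : (qf F G).IsHomogeneous 2 := by
  apply MvPolynomial.IsHomogeneous.add
  · apply MvPolynomial.IsHomogeneous.sum
    intro e _
    induction e using Sym2.ind with
    | _ a b =>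
      simp only [Sym2.lift_mk]
      exact (isHomogeneous_X F a).mul (isHomogeneous_X F b)
  · apply MvPolynomial.IsHomogeneous.sum
    intro i _
    simpa using (isHomogeneous_X F i).pow 2

lemma deg_single (i : Fin n) (k : ℕ) : (Finsupp.single i k).degree = k := by
  rcases eq_or_ne k 0 with rfl | hk
  · simp [Finsupp.degree]
  · rw [Finsupp.degree_apply, Finsupp.support_single_ne_zero _ hk, Finset.sum_singleton,
      Finsupp.single_eq_same]

lemma deg_add (m₁ m₂ : Fin n →₀ ℕ) : (m₁ + m₂).degree = m₁.degree + m₂.degree := by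
  simp [Finsupp.degree_eq_weight_one, map_add]

lemma deg_one_cases {m : Fin n →₀ ℕ} (h : m.degree = 1) :
    ∃ i, m = Finsupp.single i 1 := by
  have hne : m ≠ 0 := by
    intro h0; rw [h0] at h; simp [Finsupp.degree] at h
  obtain ⟨i, hi⟩ := Finsupp.support_nonempty_iff.mpr hne
  refine ⟨i, ?_⟩
  have hmi : 1 ≤ m i := Nat.one_le_iff_ne_zero.mpr (Finsupp.mem_support_iff.mp hi)
  have hle : m i ≤ m.degree := Finsupp.le_degree i m
  ext x
  rcases eq_or_ne x i with rfl | hx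
  · simp only [Finsupp.single_eq_same]; omega
  · simp only [Finsupp.single_apply, if_neg (Ne.symm hx)]
    by_contra hmx
    have hx' : x ∈ m.support := Finsupp.mem_support_iff.mpr hmx
    have hsub : ({i, x} : Finset (Fin n)) ⊆ m.support := by
      intro y hy; simp at hy; rcases hy with rfl | rfl <;> assumption
    have h2 := Finset.sum_le_sum_of_subset hsub (f := m)
    rw [Finset.sum_pair (Ne.symm hx)] at h2
    have h3 : m i + m x ≤ m.degree := h2
    omega

lemma coeff_qf_sq (G : SimpleGraph (Fin n)) (i : Fin n) :
    coeff (Finsupp.single i 2) (qf F G) = (1 : F) := by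
  rw [qf, coeff_add, coeff_sum, coeff_sum]
  have h1 : ∀ e ∈ G.edgeFinset,
      coeff (Finsupp.single i 2)
        (Sym2.lift ⟨fun i j => (X i : MvPolynomial (Fin n) F) * X j,
          fun i j => by ring⟩ e) = 0 := by
    intro e he
    induction e using Sym2.ind with
    | _ a b =>
      have hab : a ≠ b := (G.mem_edgeSet.mp (SimpleGraph.mem_edgeFinset.mp he)).ne
      simp only [Sym2.lift_mk, aux_coeff_XX]
      rw [if_neg (single_two_ne_pair hab)]
  rw [Finset.sum_eq_zero h1, zero_add]
  have h2 : ∀ k : Fin n, coeff (Finsupp.single i 2) ((X k : MvPolynomial (Fin n) F) ^ 2)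
      = if k = i then (1 : F) else 0 := by
    intro k
    rw [coeff_X_pow]
    congr 1
    simp [Finsupp.single_left_inj (two_ne_zero)]
  simp only [h2]
  simp

lemma coeff_qf_pair (G : SimpleGraph (Fin n)) {i j : Fin n} (hij : i ≠ j) :
    coeff (Finsupp.single i 1 + Finsupp.single j 1) (qf F G)
      = if G.Adj i j then (1 : F) else 0 := by
  rw [qf, coeff_add, coeff_sum, coeff_sum]
  have h2 : ∀ k : Fin n,
      coeff (Finsupp.single i 1 + Finsupp.single j 1)
        ((X k : MvPolynomial (Fin n) F) ^ 2) = 0 := by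
    intro k
    rw [coeff_X_pow, if_neg]
    intro h
    exact single_two_ne_pair hij h.symm
  rw [Finset.sum_eq_zero (fun k _ => h2 k), add_zero]
  have h1 : ∀ e ∈ G.edgeFinset,
      coeff (Finsupp.single i 1 + Finsupp.single j 1)
        (Sym2.lift ⟨fun i j => (X i : MvPolynomial (Fin n) F) * X j,
          fun i j => by ring⟩ e)
      = if e = s(i, j) then (1 : F) else 0 := by
    intro e he
    induction e using Sym2.ind with
    | _ a b =>
      have hab : a ≠ b := (G.mem_edgeSet.mp (SimpleGraph.mem_edgeFinset.mp he)).ne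
      simp only [Sym2.lift_mk, aux_coeff_XX]
      congr 1
      simp only [eq_iff_iff, Sym2.eq_iff]
      constructor
      · exact fun h => pair_eq hab h
      · rintro (⟨rfl, rfl⟩ | ⟨rfl, rfl⟩)
        · rfl
        · rw [add_comm]
  rw [Finset.sum_congr rfl h1, Finset.sum_ite_eq' G.edgeFinset s(i,j) (fun _ => (1:F))]
  simp [SimpleGraph.mem_edgeFinset]

end Aux

/-- for the quadratic form `f_G = Σ_{{i,j}∈E} x_i x_j + Σ_i x_i²` and every
`S ⊆ [n]` with `1 ≤ |S| ≤ n-1`, the Nisan matrix `M_S(f_G)` has rank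
`cutrank_F(S) + 2`. -/
theorem nisanRank_quadratic_form
    {F : Type*} [Field F] {n : ℕ} (G : SimpleGraph (Fin n)) (S : Finset (Fin n))
    (h1 : 1 ≤ S.card) (h2 : S.card ≤ n - 1) :
    nisanRank
      ((∑ e ∈ G.edgeFinset, Sym2.lift ⟨fun i j => X i * X j, fun i j => by ring⟩ e) +
        ∑ i : Fin n, (X i : MvPolynomial (Fin n) F) ^ 2) S
      = cutRank F G S + 2 := by
  classical
  obtain ⟨i₀, hi₀⟩ := Finset.card_pos.mp h1
  obtain ⟨j₀, hj₀⟩ : ∃ j : Fin n, j ∉ S := by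
    by_contra hcon
    push_neg at hcon
    have hS : S = Finset.univ := Finset.eq_univ_iff_forall.mpr hcon
    rw [hS, Finset.card_univ, Fintype.card_fin] at h1 h2
    omega
  show Module.finrank F
      (Submodule.span F (Set.range fun m₁ => nisanMatrix (qf F G) S m₁))
    = cutRank F G S + 2
  set rows : (Fin n →₀ ℕ) → ((Fin n →₀ ℕ) → F) :=
    fun m₁ => nisanMatrix (qf F G) S m₁ with hrowsdef
  have hrow : ∀ m₁ m₂, rows m₁ m₂
      = if m₁.support ⊆ S ∧ m₂.support ⊆ Sᶜ then coeff (m₁ + m₂) (qf F G) else 0 :=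
    fun _ _ => rfl
  have hcz : ∀ d : Fin n →₀ ℕ, d.degree ≠ 2 → coeff d (qf F G) = (0 : F) :=
    fun _ hd => (qf_hom G).coeff_eq_zero hd
  -- the three pieces
  set r1 : {i : Fin n // i ∈ S} → ((Fin n →₀ ℕ) → F) :=
    fun u => rows (Finsupp.single u.1 1) with hr1def
  have hr1app : ∀ (u : {i : Fin n // i ∈ S}) m₂, r1 u m₂
      = if (Finsupp.single u.1 1).support ⊆ S ∧ m₂.support ⊆ Sᶜ
        then coeff (Finsupp.single u.1 1 + m₂) (qf F G) else 0 :=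
    fun _ _ => rfl
  set w2 : (Fin n →₀ ℕ) → F := rows (Finsupp.single i₀ 2) with hw2def
  set w3 : (Fin n →₀ ℕ) → F := rows 0 with hw3def
  set W₁ : Submodule F ((Fin n →₀ ℕ) → F) := Submodule.span F (Set.range r1) with hW₁def
  set W₂ : Submodule F ((Fin n →₀ ℕ) → F) := Submodule.span F {w2} with hW₂def
  set W₃ : Submodule F ((Fin n →₀ ℕ) → F) := Submodule.span F {w3} with hW₃def
  -- values
  have hw2val : ∀ m₂, w2 m₂ = if m₂ = (0 : Fin n →₀ ℕ) then (1 : F) else 0 := by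
    intro m₂
    rw [hw2def, hrow]
    rcases eq_or_ne m₂ 0 with rfl | hm
    · rw [if_pos ⟨Finsupp.support_single_subset.trans
          (Finset.singleton_subset_iff.mpr hi₀), by simp⟩, if_pos rfl, add_zero,
        coeff_qf_sq]
    · rw [if_neg hm]
      split_ifs with h
      · apply hcz
        rw [deg_add, deg_single]
        have hd : m₂.degree ≠ 0 := fun h0 => hm ((Finsupp.degree_eq_zero_iff m₂).mp h0)
        omega
      · rfl
  have hw3val : ∀ m₂, w3 m₂
      = if m₂.support ⊆ Sᶜ then coeff m₂ (qf F G) else 0 := by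
    intro m₂
    rw [hw3def, hrow, zero_add]
    by_cases h : m₂.support ⊆ Sᶜ
    · rw [if_pos ⟨by simp, h⟩, if_pos h]
    · rw [if_neg (fun hh => h hh.2), if_neg h]
  have hr1supp : ∀ (u : {i : Fin n // i ∈ S}) m₂, r1 u m₂ ≠ 0 →
      ∃ j, j ∉ S ∧ m₂ = Finsupp.single j 1 := by
    intro u m₂ hne
    rw [hr1app] at hne
    split_ifs at hne with h
    · have hdeg : (Finsupp.single u.1 1 + m₂).degree = 2 := by
        by_contra hd; exact hne (hcz _ hd)
      rw [deg_add, deg_single] at hdeg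
      obtain ⟨j, rfl⟩ := deg_one_cases (by omega : m₂.degree = 1)
      refine ⟨j, ?_, rfl⟩
      have hjmem : j ∈ (Finsupp.single j (1:ℕ)).support := by
        rw [Finsupp.support_single_ne_zero _ one_ne_zero]
        exact Finset.mem_singleton_self j
      exact Finset.mem_compl.mp (h.2 hjmem)
    · exact absurd rfl hne
  have hr1adj : ∀ (u : {i : Fin n // i ∈ S}) (j : Fin n), j ∉ S →
      r1 u (Finsupp.single j 1) = if G.Adj u.1 j then (1 : F) else 0 := by
    intro u j hj
    have hne : u.1 ≠ j := fun h => hj (h ▸ u.2)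
    rw [hr1app, if_pos ⟨Finsupp.support_single_subset.trans
        (Finset.singleton_subset_iff.mpr u.2),
        Finsupp.support_single_subset.trans
          (Finset.singleton_subset_iff.mpr (Finset.mem_compl.mpr hj))⟩,
      coeff_qf_pair G hne]
  -- generic vanishing lemma
  have hker : ∀ (m₂ : Fin n →₀ ℕ) (s : Set ((Fin n →₀ ℕ) → F)),
      (∀ g ∈ s, g m₂ = 0) → ∀ v ∈ Submodule.span F s, v m₂ = 0 := by
    intro m₂ s hs v hv
    have hle : Submodule.span F s ≤
        LinearMap.ker (LinearMap.proj m₂ : ((Fin n →₀ ℕ) → F) →ₗ[F] F) :=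
      Submodule.span_le.mpr (fun g hg => hs g hg)
    exact hle hv
  -- key value facts
  have hr1_zero : ∀ u : {i : Fin n // i ∈ S}, r1 u 0 = 0 := by
    intro u
    by_contra hne
    obtain ⟨j, _, hj⟩ := hr1supp u 0 hne
    have := congrArg Finsupp.degree hj
    rw [deg_single] at this
    simp [Finsupp.degree] at this
  have hr1_j2 : ∀ u : {i : Fin n // i ∈ S}, r1 u (Finsupp.single j₀ 2) = 0 := by
    intro u
    by_contra hne
    obtain ⟨j, _, hj⟩ := hr1supp u _ hne
    have := congrArg Finsupp.degree hj
    rw [deg_single, deg_single] at this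
    omega
  have hw2_0 : w2 0 = 1 := by rw [hw2val]; simp
  have hw2_j2 : w2 (Finsupp.single j₀ 2) = 0 := by
    rw [hw2val, if_neg (fun h => two_ne_zero (Finsupp.single_eq_zero.mp h))]
  have hw3_j2 : w3 (Finsupp.single j₀ 2) = 1 := by
    rw [hw3val, if_pos (Finsupp.support_single_subset.trans
      (Finset.singleton_subset_iff.mpr (Finset.mem_compl.mpr hj₀))), coeff_qf_sq]
  -- span equality
  have hVeq : Submodule.span F (Set.range rows) = W₁ ⊔ W₂ ⊔ W₃ := by
    apply le_antisymm
    · rw [Submodule.span_le]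
      rintro _ ⟨m₁, rfl⟩
      by_cases hs : m₁.support ⊆ S
      · rcases hdeg : m₁.degree with _ | _ | _ | k
        · -- degree 0
          have hm0 : m₁ = 0 := (Finsupp.degree_eq_zero_iff m₁).mp hdeg
          rw [hm0, ← hw3def]
          exact le_sup_right (α := Submodule F ((Fin n →₀ ℕ) → F))
            (Submodule.mem_span_singleton_self w3)
        · -- degree 1
          obtain ⟨i, rfl⟩ := deg_one_cases hdeg
          have hiS : i ∈ S := by
            apply hs
            rw [Finsupp.support_single_ne_zero _ one_ne_zero]
            exact Finset.mem_singleton_self i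
          have : rows (Finsupp.single i 1) = r1 ⟨i, hiS⟩ := rfl
          rw [this]
          exact le_sup_left (α := Submodule F ((Fin n →₀ ℕ) → F))
            (le_sup_left (α := Submodule F ((Fin n →₀ ℕ) → F))
              (Submodule.subset_span (Set.mem_range_self _)))
        · -- degree 2
          have heq : rows m₁ = (coeff m₁ (qf F G)) • w2 := by
            funext m₂
            rcases eq_or_ne m₂ 0 with rfl | hm
            · rw [hrow, if_pos ⟨hs, by simp⟩, add_zero, Pi.smul_apply, hw2_0,
                smul_eq_mul, mul_one]
            · rw [hrow, Pi.smul_apply, hw2val, if_neg hm, smul_eq_mul, mul_zero]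
              split_ifs with h
              · apply hcz
                rw [deg_add, hdeg]
                have hd : m₂.degree ≠ 0 :=
                  fun h0 => hm ((Finsupp.degree_eq_zero_iff m₂).mp h0)
                omega
              · rfl
          rw [heq]
          exact le_sup_left (α := Submodule F ((Fin n →₀ ℕ) → F))
            (le_sup_right (α := Submodule F ((Fin n →₀ ℕ) → F))
              (Submodule.smul_mem _ _ (Submodule.mem_span_singleton_self w2)))
        · -- degree ≥ 3
          have heq : rows m₁ = 0 := by
            funext m₂
            rw [hrow]
            split_ifs with h
            · apply hcz
              rw [deg_add, hdeg]
              omega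
            · rfl
          rw [heq]
          exact Submodule.zero_mem _
      · have heq : rows m₁ = 0 := by
          funext m₂
          rw [hrow, if_neg (fun hh => hs hh.1)]
          rfl
        rw [heq]
        exact Submodule.zero_mem _
    · refine sup_le (sup_le ?_ ?_) ?_
      · rw [hW₁def, Submodule.span_le]
        rintro _ ⟨u, rfl⟩
        exact Submodule.subset_span (Set.mem_range_self _)
      · rw [hW₂def, Submodule.span_le]
        rintro g hg
        rw [Set.mem_singleton_iff] at hg
        rw [hg, hw2def]
        exact Submodule.subset_span (Set.mem_range_self _)
      · rw [hW₃def, Submodule.span_le]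
        rintro g hg
        rw [Set.mem_singleton_iff] at hg
        rw [hg, hw3def]
        exact Submodule.subset_span (Set.mem_range_self _)
  -- finite dimensionality
  haveI hfd1 : FiniteDimensional F W₁ :=
    FiniteDimensional.span_of_finite F (Set.finite_range r1)
  haveI hfd2 : FiniteDimensional F W₂ :=
    FiniteDimensional.span_of_finite F (Set.finite_singleton w2)
  haveI hfd3 : FiniteDimensional F W₃ :=
    FiniteDimensional.span_of_finite F (Set.finite_singleton w3)
  -- disjointness
  have hdisj12 : Disjoint W₁ W₂ := by
    rw [Submodule.disjoint_def]
    intro v hv1 hv2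
    obtain ⟨c, rfl⟩ := Submodule.mem_span_singleton.mp hv2
    have h0 : (c • w2) 0 = 0 := by
      refine hker 0 (Set.range r1) ?_ _ hv1
      rintro _ ⟨u, rfl⟩
      exact hr1_zero u
    rw [Pi.smul_apply, hw2_0, smul_eq_mul, mul_one] at h0
    rw [h0, zero_smul]
  have hdisj123 : Disjoint (W₁ ⊔ W₂) W₃ := by
    rw [Submodule.disjoint_def]
    intro v hv1 hv3
    obtain ⟨c, rfl⟩ := Submodule.mem_span_singleton.mp hv3
    obtain ⟨a, ha, b, hb, hab⟩ := Submodule.mem_sup.mp hv1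
    have hA : a (Finsupp.single j₀ 2) = 0 := by
      refine hker _ (Set.range r1) ?_ _ ha
      rintro _ ⟨u, rfl⟩
      exact hr1_j2 u
    have hB : b (Finsupp.single j₀ 2) = 0 := by
      refine hker _ {w2} ?_ _ hb
      rintro g hg
      rw [Set.mem_singleton_iff] at hg
      rw [hg]
      exact hw2_j2
    have hv : (c • w3) (Finsupp.single j₀ 2) = 0 := by
      rw [← hab, Pi.add_apply, hA, hB, add_zero]
    rw [Pi.smul_apply, hw3_j2, smul_eq_mul, mul_one] at hv
    rw [hv, zero_smul]
  -- ranks of W₂ W₃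
  have hw2ne : w2 ≠ 0 := by
    intro h
    have := hw2_0
    rw [h] at this
    simp at this
  have hw3ne : w3 ≠ 0 := by
    intro h
    have := hw3_j2
    rw [h] at this
    simp at this
  have hr2 : Module.finrank F W₂ = 1 := finrank_span_singleton hw2ne
  have hr3 : Module.finrank F W₃ = 1 := finrank_span_singleton hw3ne
  -- rank of W₁ = cutRank
  set A : Matrix {i : Fin n // i ∈ S} {i : Fin n // i ∉ S} F :=
    Matrix.of fun u v => if G.Adj u.val v.val then (1 : F) else 0 with hAdef
  have hcut : cutRank F G S = Module.finrank F (Submodule.span F (Set.range A)) :=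
    Matrix.rank_eq_finrank_span_row A
  set Φ : ((Fin n →₀ ℕ) → F) →ₗ[F] ({i : Fin n // i ∉ S} → F) :=
    LinearMap.pi fun v => LinearMap.proj (Finsupp.single v.1 1) with hΦdef
  have hΦapp : ∀ g v, Φ g v = g (Finsupp.single v.1 1) := fun _ _ => rfl
  have hcomp : ∀ u, Φ (r1 u) = A u := by
    intro u
    funext v
    rw [hΦapp, hr1adj u v.1 v.2]
    rfl
  have hmap : W₁.map Φ = Submodule.span F (Set.range A) := by
    rw [hW₁def, Submodule.map_span, ← Set.range_comp]
    exact congrArg (Submodule.span F) (congrArg Set.range (funext hcomp))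
  have hinj : ∀ x ∈ W₁, Φ x = 0 → x = 0 := by
    intro x hx hΦx
    funext m₂
    by_cases hm : ∃ j, j ∉ S ∧ m₂ = Finsupp.single j 1
    · obtain ⟨j, hj, rfl⟩ := hm
      have := congrFun hΦx ⟨j, hj⟩
      rw [hΦapp] at this
      exact this
    · push_neg at hm
      refine hker m₂ (Set.range r1) ?_ x hx
      rintro _ ⟨u, rfl⟩
      by_contra hne
      obtain ⟨j, hj, hmeq⟩ := hr1supp u m₂ hne
      exact hm j hj hmeq
  have hker0 : LinearMap.ker (Φ.domRestrict W₁) = ⊥ := by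
    ext x
    simp only [LinearMap.mem_ker, LinearMap.domRestrict_apply, Submodule.mem_bot]
    constructor
    · intro h
      exact Subtype.ext (hinj x.1 x.2 h)
    · rintro rfl
      simp
  have hr1rank : Module.finrank F W₁ = cutRank F G S := by
    rw [hcut, ← hmap, ← LinearMap.range_domRestrict]
    exact (LinearMap.finrank_range_of_inj (LinearMap.ker_eq_bot.mp hker0)).symm
  -- assemble
  rw [hVeq]
  have e12 : Module.finrank F (W₁ ⊔ W₂ : Submodule F ((Fin n →₀ ℕ) → F))
      = Module.finrank F W₁ + Module.finrank F W₂ := by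
    have h := Submodule.finrank_sup_add_finrank_inf_eq W₁ W₂
    rw [hdisj12.eq_bot] at h
    simpa using h
  have e123 : Module.finrank F ((W₁ ⊔ W₂) ⊔ W₃ : Submodule F ((Fin n →₀ ℕ) → F))
      = Module.finrank F (W₁ ⊔ W₂ : Submodule F ((Fin n →₀ ℕ) → F))
        + Module.finrank F W₃ := by
    have h := Submodule.finrank_sup_add_finrank_inf_eq (W₁ ⊔ W₂) W₃
    rw [hdisj123.eq_bot] at h
    simpa using h
  rw [e123, e12, hr1rank, hr2, hr3]
end

section
/- Let f(x_1,...,x_n) be a polynomial over a field F, σ a permutation of [n], and suppose for some i the Nisan matrix M_{T_i}(f) with T_i = {σ(1),...,σ(i)} has rank r. Then every ROABP computing f in the variable order σ has at least r vertices in its i-th layer (hence width at least r). -/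
open MvPolynomial
open scoped Classical
set_option maxHeartbeats 1000000

/-- A Read-Once Oblivious Algebraic Branching Program in variable order `σ`:
a layered DAG with layers `0, …, n`, `w i` vertices in layer `i`, a single source
(layer 0) and sink (layer n), whose edges from layer `i` to layer `i+1` are recorded as
a `w i × w (i+1)` matrix of univariate polynomials, to be read in the variable
`x_{σ(i)}`. -/
structure ROABP (F : Type*) [Field F] (n : ℕ) (σ : Equiv.Perm (Fin n)) where
  w : ℕ → ℕ
  h0 : w 0 = 1
  hn : w n = 1
  mat : ∀ i : Fin n, Matrix (Fin (w i.val)) (Fin (w (i.val + 1))) (Polynomial F)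

namespace ROABP

variable {F : Type*} [Field F] {n : ℕ} {σ : Equiv.Perm (Fin n)}

/-- The product of the first `i` layer matrices, with the univariate label of layer `i`
substituted by the variable `x_{σ(i)}`. -/
noncomputable def prodUpTo (R : ROABP F n σ) :
    ∀ i : ℕ, i ≤ n → Matrix (Fin (R.w 0)) (Fin (R.w i)) (MvPolynomial (Fin n) F)
  | 0, _ => 1
  | (i + 1), h =>
      R.prodUpTo i (Nat.le_of_succ_le h) *
        ((R.mat ⟨i, h⟩).map fun p =>
          Polynomial.aeval (MvPolynomial.X (σ ⟨i, h⟩) : MvPolynomial (Fin n) F) p)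

/-- The ROABP `R` computes `f` if the source-sink entry of the full layered product
equals `f`. -/
def Computes (R : ROABP F n σ) (f : MvPolynomial (Fin n) F) : Prop :=
  R.prodUpTo n le_rfl ⟨0, by rw [R.h0]; exact Nat.one_pos⟩
    ⟨0, by rw [R.hn]; exact Nat.one_pos⟩ = f

/-- The width of an ROABP: the maximum number of vertices in any layer. -/
def width (R : ROABP F n σ) : ℕ := (Finset.range (n + 1)).sup R.w

end ROABP

section Aux

variable {F : Type*} [Field F] {n : ℕ} {σ : Equiv.Perm (Fin n)}

lemma support_subset_of_mem_supported {S : Set (Fin n)} {p : MvPolynomial (Fin n) F}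
    (hp : p ∈ supported F S) {m : Fin n →₀ ℕ} (hm : m ∈ p.support) :
    ↑m.support ⊆ S := by
  rw [mem_supported] at hp
  intro x hx
  exact hp (Finset.mem_coe.2 ((mem_vars x).2 ⟨m, hm, hx⟩))

lemma coeff_mul_supported {S : Set (Fin n)} {A B : MvPolynomial (Fin n) F}
    (hA : A ∈ supported F S) (hB : B ∈ supported F Sᶜ)
    {m₁ m₂ : Fin n →₀ ℕ} (h1 : ↑m₁.support ⊆ S) (h2 : ↑m₂.support ⊆ Sᶜ) :
    coeff (m₁ + m₂) (A * B) = coeff m₁ A * coeff m₂ B := by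
  rw [coeff_mul]
  apply Finset.sum_eq_single (m₁, m₂)
  · rintro ⟨a, b⟩ hab hne
    rw [Finset.HasAntidiagonal.mem_antidiagonal] at hab
    by_cases ha : coeff a A = 0
    · simp [ha]
    by_cases hb : coeff b B = 0
    · simp [hb]
    exfalso; apply hne
    have hsa : ↑a.support ⊆ S :=
      support_subset_of_mem_supported hA (mem_support_iff.2 ha)
    have hsb : ↑b.support ⊆ Sᶜ :=
      support_subset_of_mem_supported hB (mem_support_iff.2 hb)
    have key : ∀ x, a x = m₁ x ∧ b x = m₂ x := by
      intro x
      have hx := DFunLike.congr_fun hab x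
      simp only [Finsupp.add_apply] at hx
      by_cases hxS : x ∈ S
      · have hb0 : b x = 0 :=
          Finsupp.notMem_support_iff.1 fun h => (hsb (Finset.mem_coe.2 h)) hxS
        have hm20 : m₂ x = 0 :=
          Finsupp.notMem_support_iff.1 fun h => (h2 (Finset.mem_coe.2 h)) hxS
        omega
      · have ha0 : a x = 0 :=
          Finsupp.notMem_support_iff.1 fun h => hxS (hsa (Finset.mem_coe.2 h))
        have hm10 : m₁ x = 0 :=
          Finsupp.notMem_support_iff.1 fun h => hxS (h1 (Finset.mem_coe.2 h))
        omega
    exact Prod.ext (Finsupp.ext fun x => (key x).1) (Finsupp.ext fun x => (key x).2)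
  · intro h
    exact absurd (Finset.HasAntidiagonal.mem_antidiagonal.2 (by simp)) h

lemma aeval_X_mem_supported (v : Fin n) (p : Polynomial F) :
    Polynomial.aeval (X v : MvPolynomial (Fin n) F) p ∈
      supported F ({v} : Set (Fin n)) := by
  rw [supported_eq_adjoin_X, Set.image_singleton,
    Algebra.adjoin_singleton_eq_range_aeval]
  exact ⟨p, rfl⟩

lemma prodUpTo_mem_supported (R : ROABP F n σ) :
    ∀ (j : ℕ) (h : j ≤ n) (k : Fin (R.w 0)) (l : Fin (R.w j)),
      R.prodUpTo j h k l ∈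
        supported F (↑((Finset.univ.filter fun t : Fin n => t.val < j).image σ) :
          Set (Fin n))
  | 0, h, k, l => by
      show (1 : Matrix (Fin (R.w 0)) (Fin (R.w 0)) (MvPolynomial (Fin n) F)) k l ∈ _
      rw [Matrix.one_apply]
      split
      · exact one_mem _
      · exact zero_mem _
  | (j + 1), h, k, l => by
      show (R.prodUpTo j (Nat.le_of_succ_le h) *
        ((R.mat ⟨j, h⟩).map fun p =>
          Polynomial.aeval (MvPolynomial.X (σ ⟨j, h⟩) : MvPolynomial (Fin n) F) p)) k l ∈ _
      rw [Matrix.mul_apply]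
      apply Subalgebra.sum_mem
      intro m _
      apply mul_mem
      · refine supported_mono ?_ (prodUpTo_mem_supported R j (Nat.le_of_succ_le h) k m)
        refine Finset.coe_subset.2 (Finset.image_subset_image ?_)
        intro t ht
        simp only [Finset.mem_filter] at ht ⊢
        exact ⟨ht.1, Nat.lt_succ_of_lt ht.2⟩
      · refine supported_mono ?_ (aeval_X_mem_supported (σ ⟨j, h⟩) (R.mat ⟨j, h⟩ m l))
        intro x hx
        rw [Set.mem_singleton_iff] at hx
        subst hx
        refine Finset.mem_coe.2 (Finset.mem_image_of_mem σ ?_)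
        simp [Nat.lt_succ_self]

lemma prodUpTo_decomp (R : ROABP F n σ) (i : ℕ) (hi : i ≤ n) (j : ℕ) (h : j ≤ n)
    (hij : i ≤ j) :
    ∃ B : Matrix (Fin (R.w i)) (Fin (R.w j)) (MvPolynomial (Fin n) F),
      (∀ k l, B k l ∈ supported F {x : Fin n | ∃ t : Fin n, i ≤ t.val ∧ σ t = x}) ∧
      R.prodUpTo j h = R.prodUpTo i hi * B := by
  induction j with
  | zero =>
      have hi0 : i = 0 := Nat.le_zero.1 hij
      subst hi0
      refine ⟨1, fun k l => ?_, (Matrix.mul_one _).symm⟩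
      rw [Matrix.one_apply]
      split
      · exact one_mem _
      · exact zero_mem _
  | succ j ih =>
      rcases Nat.lt_or_ge j i with hlt | hge
      · have hi' : i = j + 1 := le_antisymm hij hlt
        subst hi'
        refine ⟨1, fun k l => ?_, (Matrix.mul_one _).symm⟩
        rw [Matrix.one_apply]
        split
        · exact one_mem _
        · exact zero_mem _
      · obtain ⟨B, hB, hEq⟩ := ih (Nat.le_of_succ_le h) hge
        set M : Matrix (Fin (R.w j)) (Fin (R.w (j + 1))) (MvPolynomial (Fin n) F) :=
          (R.mat ⟨j, h⟩).map fun p =>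
            Polynomial.aeval (MvPolynomial.X (σ ⟨j, h⟩) : MvPolynomial (Fin n) F) p with hM
        refine ⟨B * M, fun k l => ?_, ?_⟩
        · rw [Matrix.mul_apply]
          apply Subalgebra.sum_mem
          intro m _
          apply mul_mem (hB k m)
          refine supported_mono ?_ (aeval_X_mem_supported (σ ⟨j, h⟩) (R.mat ⟨j, h⟩ m l))
          intro x hx
          rw [Set.mem_singleton_iff] at hx
          exact ⟨⟨j, h⟩, hge, hx.symm⟩
        · show R.prodUpTo j (Nat.le_of_succ_le h) * M = _
          rw [hEq, Matrix.mul_assoc]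

end Aux

/-- one direction of Nisan's characterization: if the Nisan matrix of `f`
with respect to the prefix `T_i = {σ(1), …, σ(i)}` has rank `r`, then every ROABP
computing `f` in order `σ` has at least `r` vertices in its `i`-th layer. -/
theorem roabp_layer_lower_bound
    {F : Type*} [Field F] {n : ℕ} (f : MvPolynomial (Fin n) F)
    (σ : Equiv.Perm (Fin n)) (i : ℕ) (hi : i ≤ n) (r : ℕ)
    (hr : nisanRank f ((Finset.univ.filter fun t : Fin n => t.val < i).image σ) = r)
    (R : ROABP F n σ) (hcomp : R.Computes f) :
    r ≤ R.w i := by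
  set S : Finset (Fin n) := (Finset.univ.filter fun t : Fin n => t.val < i).image σ with hS
  obtain ⟨B, hB, hEq⟩ := prodUpTo_decomp R i hi n le_rfl hi
  -- the source and sink indices
  set s0 : Fin (R.w 0) := ⟨0, by rw [R.h0]; exact Nat.one_pos⟩ with hs0
  set sn : Fin (R.w n) := ⟨0, by rw [R.hn]; exact Nat.one_pos⟩ with hsn
  have hf : f = ∑ k : Fin (R.w i), R.prodUpTo i hi s0 k * B k sn := by
    rw [← hcomp]
    show R.prodUpTo n le_rfl s0 sn = _
    rw [hEq, Matrix.mul_apply]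
  -- entries of B lie in polynomials supported on the complement of S
  have hBc : ∀ k l, B k l ∈ supported F ((↑S : Set (Fin n))ᶜ) := by
    intro k l
    refine supported_mono ?_ (hB k l)
    rintro x ⟨t, hti, rfl⟩
    intro hx
    rw [Finset.mem_coe, hS, Finset.mem_image] at hx
    obtain ⟨t', ht', hEq'⟩ := hx
    rw [Finset.mem_filter] at ht'
    have : t' = t := σ.injective hEq'
    omega
  have hAc : ∀ k, R.prodUpTo i hi s0 k ∈ supported F (↑S : Set (Fin n)) := by
    intro k
    exact prodUpTo_mem_supported R i hi s0 k
  -- the candidate spanning vectors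
  set v : Fin (R.w i) → ((Fin n →₀ ℕ) → F) := fun k m₂ =>
    if m₂.support ⊆ Sᶜ then coeff m₂ (B k sn) else 0 with hv
  have hrow : ∀ m₁ : Fin n →₀ ℕ,
      nisanMatrix f S m₁ ∈ Submodule.span F (Set.range v) := by
    intro m₁
    by_cases hm₁ : m₁.support ⊆ S
    · have : nisanMatrix f S m₁ = ∑ k : Fin (R.w i), coeff m₁ (R.prodUpTo i hi s0 k) • v k := by
        funext m₂
        rw [Finset.sum_apply]
        by_cases hm₂ : m₂.support ⊆ Sᶜ
        · have : ∀ k : Fin (R.w i),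
              (coeff m₁ (R.prodUpTo i hi s0 k) • v k) m₂ =
                coeff m₁ (R.prodUpTo i hi s0 k) * coeff m₂ (B k sn) := by
            intro k
            simp [hv, hm₂]
          rw [Finset.sum_congr rfl fun k _ => this k]
          show (if m₁.support ⊆ S ∧ m₂.support ⊆ Sᶜ then f.coeff (m₁ + m₂) else 0) = _
          rw [if_pos ⟨hm₁, hm₂⟩, hf]
          rw [MvPolynomial.coeff_sum]
          refine Finset.sum_congr rfl fun k _ => ?_
          refine coeff_mul_supported (hAc k) (hBc k sn) ?_ ?_
          · exact fun x hx => Finset.mem_coe.2 (hm₁ (Finset.mem_coe.1 hx))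
          · intro x hx
            have := hm₂ (Finset.mem_coe.1 hx)
            rw [Finset.mem_compl] at this
            exact this
        · have h0 : ∀ k : Fin (R.w i),
              (coeff m₁ (R.prodUpTo i hi s0 k) • v k) m₂ = 0 := by
            intro k; simp [hv, hm₂]
          rw [Finset.sum_congr rfl fun k _ => h0 k]
          show (if m₁.support ⊆ S ∧ m₂.support ⊆ Sᶜ then f.coeff (m₁ + m₂) else 0) = _
          rw [if_neg (fun hc => hm₂ hc.2)]
          simp
      rw [this]
      exact Submodule.sum_mem _ fun k _ =>
        Submodule.smul_mem _ _ (Submodule.subset_span ⟨k, rfl⟩)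
    · have : nisanMatrix f S m₁ = 0 := by
        funext m₂
        show (if m₁.support ⊆ S ∧ m₂.support ⊆ Sᶜ then f.coeff (m₁ + m₂) else 0) = 0
        rw [if_neg (fun hc => hm₁ hc.1)]
      rw [this]
      exact Submodule.zero_mem _
  -- conclude via rank bounds
  have hle : Submodule.span F (Set.range fun m₁ => nisanMatrix f S m₁) ≤
      Submodule.span F (Set.range v) := by
    rw [Submodule.span_le]
    rintro _ ⟨m₁, rfl⟩
    exact hrow m₁
  haveI : FiniteDimensional F (Submodule.span F (Set.range v)) :=
    FiniteDimensional.span_of_finite F (Set.finite_range v)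
  calc r = nisanRank f S := hr.symm
    _ ≤ Module.finrank F (Submodule.span F (Set.range v)) :=
        Submodule.finrank_mono hle
    _ ≤ Fintype.card (Fin (R.w i)) := finrank_range_le_card v
    _ = R.w i := Fintype.card_fin _
end
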